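/- arXiv:1805.09883 — 3 statements merged into one kernel-verified Lean document; each statement's English description precedes it below -/
import Mathlib

section
/- Let n ≥ 1, L, V > 0, N ∈ ℕ, and let u be a function of bounded variation on (0,L)^n with |Du|((0,L)^n) ≤ V. Divide [0,L]^n into subcubes □_ι for ι ∈ {0,1,…,N−1}^n and let u_ι denote the mean of u over □_ι. If κ¹, κ², …, κ^{N^n} is an enumeration of {0,1,…,N−1}^n such that each κ^{j+1} = κ^j + e_k for some k ∈ {1,…,n}, then Σ_{j=1}^{N^n−1} |u_{κ^{j+1}} − u_{κ^j}| ≤ 2V·(N/L)^{n−1}. -/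
open MeasureTheory Set

noncomputable def coveringNumber {α : Type*} (d : α → α → ℝ) (E : Set α) (ε : ℝ) : ℕ :=
  sInf {k | ∃ C : Finset (Set α), C.card = k ∧ (E ⊆ ⋃ s ∈ C, s) ∧
    (∀ s ∈ C, ∀ x ∈ s, ∀ y ∈ s, d x y ≤ 2 * ε)}

noncomputable def entropy {α : Type*} (d : α → α → ℝ) (E : Set α) (ε : ℝ) : ℝ :=
  Real.logb 2 (coveringNumber d E ε)

abbrev Eucl (n : ℕ) := EuclideanSpace ℝ (Fin n)

/-- The divergence of a `C^1` vector field on `ℝ^n`. -/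
noncomputable def divg {n : ℕ} (φ : Eucl n → Eucl n) (x : Eucl n) : ℝ :=
  ∑ i, fderiv ℝ φ x (EuclideanSpace.single i 1) i

/-- The set of numbers `∫_Ω u div φ` over test vector fields `φ ∈ C_c^1(Ω, ℝ^n)` with `‖φ‖ ≤ 1`;
its supremum is the total variation `|Du|(Ω)` of the distributional derivative. -/
def testIntegrals {n : ℕ} (u : Eucl n → ℝ) (Ω : Set (Eucl n)) : Set ℝ :=
  {v | ∃ φ : Eucl n → Eucl n, ContDiff ℝ 1 φ ∧ HasCompactSupport φ ∧ tsupport φ ⊆ Ω ∧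
    (∀ x, ‖φ x‖ ≤ 1) ∧ v = ∫ x in Ω, u x * divg φ x}

/-- The total variation `|Du|(Ω)` of the distributional derivative of `u` on `Ω`. -/
noncomputable def totalVariation {n : ℕ} (u : Eucl n → ℝ) (Ω : Set (Eucl n)) : ℝ :=
  sSup (testIntegrals u Ω)

def cube (n : ℕ) (L : ℝ) : Set (Eucl n) := {x | ∀ i, x i ∈ Icc (0 : ℝ) L}

def opencube (n : ℕ) (L : ℝ) : Set (Eucl n) := {x | ∀ i, x i ∈ Ioo (0 : ℝ) L}

/-- The class `F_{[L,M,V]}` of `L¹` functions on `[0,L]^n`, bounded by `M` in `L^∞`,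
whose distributional derivative is a finite Radon measure with `|Du|((0,L)^n) ≤ V`. -/
def Fclass (n : ℕ) (L M V : ℝ) : Set (Eucl n → ℝ) :=
  {u | IntegrableOn u (cube n L) ∧ (∀ᵐ x ∂(volume.restrict (cube n L)), |u x| ≤ M) ∧
    ∀ v ∈ testIntegrals u (opencube n L), v ≤ V}

/-- The `L¹` distance on `[0,L]^n`. -/
noncomputable def dL1 (n : ℕ) (L : ℝ) (u v : Eucl n → ℝ) : ℝ :=
  ∫ x in cube n L, |u x - v x|

/-- The subcube `□_ι = ιL/N + [0, L/N]^n` of `[0,L]^n`, for `ι ∈ {0,…,N-1}^n`. -/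
def subcube (n N : ℕ) (L : ℝ) (ι : Fin n → Fin N) : Set (Eucl n) :=
  {x | ∀ i, x i ∈ Icc (((ι i : ℕ) : ℝ) * (L / N)) ((((ι i : ℕ) : ℝ) + 1) * (L / N))}

/-- The mean value `u_ι = (N/L)^n ∫_{□_ι} u` of `u` over the subcube `□_ι`. -/
noncomputable def cubeAvg (n N : ℕ) (L : ℝ) (u : Eucl n → ℝ) (ι : Fin n → Fin N) : ℝ :=
  ((N : ℝ) / L) ^ n * ∫ x in subcube n N L ι, u x

open MeasureTheory Set Filter Real

noncomputable def pl (a b δ t : ℝ) : ℝ :=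
  Real.smoothTransition ((t - a)/δ) * Real.smoothTransition ((b - t)/δ)

lemma pl_nonneg (a b δ t : ℝ) : 0 ≤ pl a b δ t :=
  mul_nonneg (smoothTransition.nonneg _) (smoothTransition.nonneg _)

lemma pl_le_one (a b δ t : ℝ) : pl a b δ t ≤ 1 :=
  mul_le_one₀ (smoothTransition.le_one _) (smoothTransition.nonneg _) (smoothTransition.le_one _)

lemma pl_zero_left {a δ t : ℝ} (b : ℝ) (hδ : 0 < δ) (h : t ≤ a) : pl a b δ t = 0 := by
  have : (t - a)/δ ≤ 0 := div_nonpos_of_nonpos_of_nonneg (by linarith) hδ.le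
  simp [pl, smoothTransition.zero_of_nonpos this]

lemma pl_zero_right {b δ t : ℝ} (a : ℝ) (hδ : 0 < δ) (h : b ≤ t) : pl a b δ t = 0 := by
  have : (b - t)/δ ≤ 0 := div_nonpos_of_nonpos_of_nonneg (by linarith) hδ.le
  simp [pl, smoothTransition.zero_of_nonpos this]

lemma pl_one {a b δ t : ℝ} (hδ : 0 < δ) (h1 : a + δ ≤ t) (h2 : t ≤ b - δ) : pl a b δ t = 1 := by
  have e1 : (1:ℝ) ≤ (t - a)/δ := (le_div_iff₀ hδ).2 (by linarith)
  have e2 : (1:ℝ) ≤ (b - t)/δ := (le_div_iff₀ hδ).2 (by linarith)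
  simp [pl, smoothTransition.one_of_one_le e1, smoothTransition.one_of_one_le e2]

lemma contDiff_pl (a b δ : ℝ) : ContDiff ℝ 1 (pl a b δ) := by
  have h1 : ContDiff ℝ 1 (fun t : ℝ => (t - a)/δ) := by
    simpa [div_eq_mul_inv] using ((contDiff_id.sub contDiff_const).mul contDiff_const)
  have h2 : ContDiff ℝ 1 (fun t : ℝ => (b - t)/δ) := by
    simpa [div_eq_mul_inv] using ((contDiff_const.sub contDiff_id).mul contDiff_const)
  exact ((smoothTransition.contDiff (n := 1)).comp h1).mul
    ((smoothTransition.contDiff (n := 1)).comp h2)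

lemma continuous_pl (a b δ : ℝ) : Continuous (pl a b δ) := (contDiff_pl a b δ).continuous

/-- smooth plateau adapted to the cell `[c h, (c+1) h]`, supported `δ` inside. -/
noncomputable def theta (h δ : ℝ) (c : ℕ) (t : ℝ) : ℝ :=
  pl (c*h + δ) ((c+1)*h - δ) δ t

lemma theta_nonneg (h δ : ℝ) (c : ℕ) (t : ℝ) : 0 ≤ theta h δ c t := pl_nonneg _ _ _ _
lemma theta_le_one (h δ : ℝ) (c : ℕ) (t : ℝ) : theta h δ c t ≤ 1 := pl_le_one _ _ _ _

lemma theta_zero_left {h δ t : ℝ} (c : ℕ) (hδ : 0 < δ) (ht : t ≤ c*h + δ) :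
    theta h δ c t = 0 := pl_zero_left _ hδ ht

lemma theta_zero_right {h δ t : ℝ} (c : ℕ) (hδ : 0 < δ) (ht : (c+1)*h - δ ≤ t) :
    theta h δ c t = 0 := pl_zero_right _ hδ ht

lemma theta_one {h δ t : ℝ} (c : ℕ) (hδ : 0 < δ) (h1 : c*h + 2*δ ≤ t) (h2 : t ≤ (c+1)*h - 2*δ) :
    theta h δ c t = 1 := pl_one hδ (by linarith) (by linarith)

lemma continuous_theta (h δ : ℝ) (c : ℕ) : Continuous (theta h δ c) := continuous_pl _ _ _
lemma contDiff_theta (h δ : ℝ) (c : ℕ) : ContDiff ℝ 1 (theta h δ c) := contDiff_pl _ _ _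

/-- smooth tent over cells `c` and `c+1`. -/
noncomputable def tent (h δ : ℝ) (c : ℕ) (t : ℝ) : ℝ :=
  ∫ s in (t - h)..t, theta h δ c s

lemma tent_nonneg {h : ℝ} (δ : ℝ) (c : ℕ) (t : ℝ) (hh : 0 ≤ h) : 0 ≤ tent h δ c t :=
  intervalIntegral.integral_nonneg (by linarith) (fun s _ => theta_nonneg _ _ _ _)

lemma intble_theta (h δ : ℝ) (c : ℕ) (a b : ℝ) :
    IntervalIntegrable (theta h δ c) volume a b :=
  (continuous_theta h δ c).intervalIntegrable a b

lemma tent_le {h : ℝ} (δ : ℝ) (c : ℕ) (t : ℝ) (hh : 0 ≤ h) : tent h δ c t ≤ h := by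
  have : tent h δ c t ≤ ∫ _ in (t - h)..t, (1:ℝ) := by
    apply intervalIntegral.integral_mono_on (by linarith) (intble_theta _ _ _ _ _)
      (intervalIntegrable_const)
    exact fun s _ => theta_le_one _ _ _ _
  simpa using this

lemma tent_zero_left {h δ t : ℝ} (c : ℕ) (hδ : 0 < δ) (hh : 0 ≤ h) (ht : t ≤ c*h + δ) :
    tent h δ c t = 0 := by
  rw [tent, intervalIntegral.integral_congr (g := fun _ => 0)]
  · simp
  · intro s hs
    rw [Set.uIcc_of_le (by linarith)] at hs
    exact theta_zero_left c hδ (le_trans hs.2 ht)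

lemma tent_zero_right {h δ t : ℝ} (c : ℕ) (hδ : 0 < δ) (hh : 0 ≤ h) (ht : (c+2)*h - δ ≤ t) :
    tent h δ c t = 0 := by
  rw [tent, intervalIntegral.integral_congr (g := fun _ => 0)]
  · simp
  · intro s hs
    rw [Set.uIcc_of_le (by linarith)] at hs
    exact theta_zero_right c hδ (by nlinarith [hs.1])

lemma tent_hasDerivAt {h : ℝ} (δ : ℝ) (c : ℕ) (t : ℝ) :
    HasDerivAt (tent h δ c) (theta h δ c t - theta h δ c (t - h)) t := by
  have key : ∀ s, tent h δ c s = (∫ x in (0:ℝ)..s, theta h δ c x)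
      - ∫ x in (0:ℝ)..(s - h), theta h δ c x := by
    intro s
    rw [tent, ← intervalIntegral.integral_interval_sub_left (intble_theta h δ c 0 s)
      (intble_theta h δ c 0 (s - h))]
  have hF : ∀ y : ℝ, HasDerivAt (fun s => ∫ x in (0:ℝ)..s, theta h δ c x) (theta h δ c y) y :=
    fun y => intervalIntegral.integral_hasDerivAt_right (intble_theta h δ c 0 y)
      ((continuous_theta h δ c).stronglyMeasurableAtFilter _ _)
      (continuous_theta h δ c).continuousAt
  have h2 : HasDerivAt (fun s : ℝ => ∫ x in (0:ℝ)..(s - h), theta h δ c x)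
      (theta h δ c (t - h)) t := by
    have := (hF (t - h)).comp t ((hasDerivAt_id t).sub_const h)
    rw [mul_one] at this
    exact this
  have := (hF t).sub h2
  exact this.congr_of_eventuallyEq (Filter.Eventually.of_forall fun s => (key s))

lemma contDiff_tent (h δ : ℝ) (c : ℕ) : ContDiff ℝ 1 (tent h δ c) := by
  rw [contDiff_one_iff_deriv]
  constructor
  · exact fun t => (tent_hasDerivAt δ c t).differentiableAt
  · have : deriv (tent h δ c) = fun t => theta h δ c t - theta h δ c (t - h) := by
      funext t; exact (tent_hasDerivAt δ c t).deriv
    rw [this]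
    exact (continuous_theta h δ c).sub ((continuous_theta h δ c).comp
      (continuous_id.sub continuous_const))

/-- the sequence of widths -/
noncomputable def dseq (h : ℝ) (m : ℕ) : ℝ := h / (m + 2)

lemma dseq_pos {h : ℝ} (hh : 0 < h) (m : ℕ) : 0 < dseq h m :=
  div_pos hh (by positivity)

lemma dseq_tendsto (h : ℝ) : Tendsto (dseq h) atTop (nhds 0) := by
  have : Tendsto (fun m : ℕ => ((m:ℝ) + 2)) atTop atTop :=
    tendsto_atTop_add_const_right _ 2 tendsto_natCast_atTop_atTop
  exact Tendsto.div_atTop (tendsto_const_nhds (x := h)) this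

lemma theta_tendsto {h : ℝ} (hh : 0 < h) (c : ℕ) (t : ℝ) :
    Tendsto (fun m => theta h (dseq h m) c t)
      atTop (nhds (Set.indicator (Ioo (c*h) ((c+1)*h)) 1 t)) := by
  by_cases ht : t ∈ Ioo (c*h) ((c+1)*h)
  · rw [Set.indicator_of_mem ht]
    have h1 : ∀ᶠ m in atTop, theta h (dseq h m) c t = 1 := by
      have hd := dseq_tendsto h
      have : ∀ᶠ m in atTop, dseq h m < min ((t - c*h)/2) (((c+1)*h - t)/2) := by
        apply (hd.eventually (eventually_lt_nhds ?_))
        · exact lt_min (by simp at ht; linarith [ht.1]) (by simp at ht; linarith [ht.2])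
      filter_upwards [this] with m hm
      obtain ⟨h1, h2⟩ := lt_min_iff.1 hm
      exact theta_one c (dseq_pos hh m) (by linarith) (by linarith)
    exact Tendsto.congr' (h1.mono fun m hm => hm.symm) tendsto_const_nhds
  · rw [Set.indicator_of_notMem ht]
    have h1 : ∀ m, theta h (dseq h m) c t = 0 := by
      intro m
      rcases not_and_or.1 (fun hc : c*h < t ∧ t < (c+1)*h => ht ⟨hc.1, hc.2⟩) with h' | h'
      · exact theta_zero_left c (dseq_pos hh m) (by push_neg at h'; linarith [dseq_pos hh m])
      · exact theta_zero_right c (dseq_pos hh m) (by push_neg at h'; linarith [dseq_pos hh m])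
    simpa [h1] using tendsto_const_nhds

/-! ### Section 2: n-dimensional pair bump fields -/

abbrev Eucl' (n : ℕ) := EuclideanSpace ℝ (Fin n)

/-- the 1D profile in coordinate `i` for the pair at cell `c` in direction `k`. -/
noncomputable def fp1 {n : ℕ} (h δ : ℝ) (k : Fin n) (c : Fin n → ℕ) (i : Fin n) : ℝ → ℝ :=
  if i = k then tent h δ (c k) else theta h δ (c i)

/-- the scalar bump for the pair at cell `c` in direction `k`. -/
noncomputable def fpair {n : ℕ} (h δ : ℝ) (k : Fin n) (c : Fin n → ℕ) (x : Eucl' n) : ℝ :=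
  ∏ i, fp1 h δ k c i (x i)

/-- the 1D derivatives of the profiles. -/
noncomputable def dfp1 {n : ℕ} (h δ : ℝ) (k : Fin n) (c : Fin n → ℕ) (i : Fin n) : ℝ → ℝ :=
  if i = k then (fun t => theta h δ (c k) t - theta h δ (c k) (t - h))
  else deriv (theta h δ (c i))

/-- the relevant directional derivative of `fpair`. -/
noncomputable def dpair {n : ℕ} (h δ : ℝ) (k : Fin n) (c : Fin n → ℕ) (x : Eucl' n) : ℝ :=
  (theta h δ (c k) (x k) - theta h δ (c k) (x k - h)) *
    ∏ i ∈ Finset.univ.erase k, theta h δ (c i) (x i)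

lemma fp1_hasDerivAt {n : ℕ} (h δ : ℝ) (k : Fin n) (c : Fin n → ℕ) (i : Fin n) (t : ℝ) :
    HasDerivAt (fp1 h δ k c i) (dfp1 h δ k c i t) t := by
  unfold fp1 dfp1
  split
  · exact tent_hasDerivAt δ (c k) t
  · exact (((contDiff_theta h δ (c i)).differentiable one_ne_zero) t).hasDerivAt

lemma contDiff_fp1 {n : ℕ} (h δ : ℝ) (k : Fin n) (c : Fin n → ℕ) (i : Fin n) :
    ContDiff ℝ 1 (fp1 h δ k c i) := by
  unfold fp1; split
  · exact contDiff_tent h δ (c k)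
  · exact contDiff_theta h δ (c i)

lemma fp1_nonneg {n : ℕ} {h : ℝ} (hh : 0 ≤ h) (δ : ℝ) (k : Fin n) (c : Fin n → ℕ) (i : Fin n)
    (t : ℝ) : 0 ≤ fp1 h δ k c i t := by
  unfold fp1; split
  · exact tent_nonneg δ _ t hh
  · exact theta_nonneg _ _ _ _

lemma contDiff_fpair {n : ℕ} (h δ : ℝ) (k : Fin n) (c : Fin n → ℕ) :
    ContDiff ℝ 1 (fpair h δ k c (n := n)) := by
  apply contDiff_prod
  intro i _
  exact (contDiff_fp1 h δ k c i).comp (EuclideanSpace.proj (𝕜 := ℝ) i).contDiff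

lemma fpair_nonneg {n : ℕ} {h : ℝ} (hh : 0 ≤ h) (δ : ℝ) (k : Fin n) (c : Fin n → ℕ)
    (x : Eucl' n) : 0 ≤ fpair h δ k c x :=
  Finset.prod_nonneg fun i _ => fp1_nonneg hh δ k c i (x i)

lemma fpair_le {n : ℕ} {h : ℝ} (hh : 0 ≤ h) (δ : ℝ) (k : Fin n) (c : Fin n → ℕ)
    (x : Eucl' n) : fpair h δ k c x ≤ h := by
  have hk : k ∈ Finset.univ := Finset.mem_univ k
  rw [fpair, ← Finset.mul_prod_erase _ _ hk]
  have h1 : fp1 h δ k c k (x k) ≤ h := by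
    unfold fp1; rw [if_pos rfl]; exact tent_le δ _ _ hh
  have h2 : ∏ i ∈ Finset.univ.erase k, fp1 h δ k c i (x i) ≤ 1 :=
    Finset.prod_le_one (fun i _ => fp1_nonneg hh δ k c i (x i))
      (fun i hi => by
        unfold fp1; rw [if_neg (Finset.ne_of_mem_erase hi)]; exact theta_le_one _ _ _ _)
  calc fp1 h δ k c k (x k) * ∏ i ∈ Finset.univ.erase k, fp1 h δ k c i (x i)
      ≤ h * 1 := mul_le_mul h1 h2 (Finset.prod_nonneg fun i _ => fp1_nonneg hh δ k c i (x i))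
        (le_trans (fp1_nonneg hh δ k c k (x k)) h1)
    _ = h := mul_one h

lemma fpair_hasFDerivAt {n : ℕ} (h δ : ℝ) (k : Fin n) (c : Fin n → ℕ) (x : Eucl' n) :
    HasFDerivAt (fpair h δ k c)
      (∑ i, (∏ j ∈ Finset.univ.erase i, fp1 h δ k c j (x j)) •
        (((1 : ℝ →L[ℝ] ℝ).smulRight (dfp1 h δ k c i (x i))).comp (EuclideanSpace.proj i))) x := by
  apply HasFDerivAt.finset_prod
  intro i _
  have h2 : HasFDerivAt (fun x : Eucl' n => x i)
      ((EuclideanSpace.proj i : Eucl' n →L[ℝ] ℝ)) x := by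
    exact ContinuousLinearMap.hasFDerivAt (EuclideanSpace.proj (𝕜 := ℝ) i)
  exact HasFDerivAt.comp x (fp1_hasDerivAt h δ k c i (x i)).hasFDerivAt h2

lemma fpair_fderiv_single {n : ℕ} (h δ : ℝ) (k : Fin n) (c : Fin n → ℕ) (x : Eucl' n) :
    (fderiv ℝ (fpair h δ k c) x) (EuclideanSpace.single k 1) = dpair h δ k c x := by
  rw [(fpair_hasFDerivAt h δ k c x).fderiv]
  rw [ContinuousLinearMap.sum_apply]
  have key : ∀ i : Fin n, ((∏ j ∈ Finset.univ.erase i, fp1 h δ k c j (x j)) •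
      (((1 : ℝ →L[ℝ] ℝ).smulRight (dfp1 h δ k c i (x i))).comp (EuclideanSpace.proj i)))
        (EuclideanSpace.single k 1)
      = if i = k then dpair h δ k c x else 0 := by
    intro i
    rcases eq_or_ne i k with rfl | hik
    · rw [if_pos rfl]
      simp only [ContinuousLinearMap.smul_apply, ContinuousLinearMap.comp_apply,
        ContinuousLinearMap.smulRight_apply, ContinuousLinearMap.one_apply]
      have : (EuclideanSpace.proj i) (EuclideanSpace.single i (1:ℝ)) = 1 := by
        simp [EuclideanSpace.proj]
      rw [this, dpair]
      have : ∀ j ∈ Finset.univ.erase i, fp1 h δ i c j (x j) = theta h δ (c j) (x j) := by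
        intro j hj; unfold fp1; rw [if_neg (Finset.ne_of_mem_erase hj)]
      rw [Finset.prod_congr rfl this]
      unfold dfp1; rw [if_pos rfl]
      simp [smul_eq_mul]; ring
    · rw [if_neg hik]
      simp only [ContinuousLinearMap.smul_apply, ContinuousLinearMap.comp_apply,
        ContinuousLinearMap.smulRight_apply, ContinuousLinearMap.one_apply]
      have : (EuclideanSpace.proj i) (EuclideanSpace.single k (1:ℝ)) = 0 := by
        simp [EuclideanSpace.proj, EuclideanSpace.single_apply, hik.symm]
      rw [this]
      simp
  rw [Finset.sum_congr rfl (fun i _ => key i)]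
  simp
def box {n : ℕ} (lo hi : Fin n → ℝ) : Set (Eucl' n) := {x | ∀ i, x i ∈ Icc (lo i) (hi i)}

lemma isClosed_box {n : ℕ} (lo hi : Fin n → ℝ) : IsClosed (box lo hi) := by
  have : box lo hi = ⋂ i, (EuclideanSpace.proj (𝕜 := ℝ) i) ⁻¹' (Icc (lo i) (hi i)) := by
    ext x; simp [box, EuclideanSpace.proj, Set.mem_iInter]
  rw [this]
  exact isClosed_iInter fun i => isClosed_Icc.preimage (EuclideanSpace.proj i).continuous

lemma isCompact_box {n : ℕ} (lo hi : Fin n → ℝ) : IsCompact (box lo hi) := by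
  have h1 : IsCompact (univ.pi fun i => Icc (lo i) (hi i)) :=
    isCompact_univ_pi fun i => isCompact_Icc
  have h2 := h1.image
    (PiLp.continuousLinearEquiv 2 ℝ (fun _ : Fin n => ℝ)).symm.continuous
  convert h2 using 1
  ext x
  constructor
  · intro hx
    exact ⟨x, fun i _ => hx i, rfl⟩
  · rintro ⟨y, hy, rfl⟩
    intro i
    simpa using hy i (Set.mem_univ i)

/-! ### dpair and support lemmas -/

lemma abs_dpair_le_one {n : ℕ} (h δ : ℝ) (k : Fin n) (c : Fin n → ℕ) (x : Eucl' n) :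
    |dpair h δ k c x| ≤ 1 := by
  rw [dpair, abs_mul]
  have h1 : |theta h δ (c k) (x k) - theta h δ (c k) (x k - h)| ≤ 1 := by
    rw [abs_le]
    constructor
    · have := theta_le_one h δ (c k) (x k - h); have := theta_nonneg h δ (c k) (x k); linarith
    · have := theta_nonneg h δ (c k) (x k - h); have := theta_le_one h δ (c k) (x k); linarith
  have h2 : |∏ i ∈ Finset.univ.erase k, theta h δ (c i) (x i)| ≤ 1 := by
    rw [abs_of_nonneg (Finset.prod_nonneg fun i _ => theta_nonneg _ _ _ _)]
    exact Finset.prod_le_one (fun i _ => theta_nonneg _ _ _ _) (fun i _ => theta_le_one _ _ _ _)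
  calc |theta h δ (c k) (x k) - theta h δ (c k) (x k - h)| *
        |∏ i ∈ Finset.univ.erase k, theta h δ (c i) (x i)| ≤ 1 * 1 :=
      mul_le_mul h1 h2 (abs_nonneg _) zero_le_one
    _ = 1 := mul_one 1

lemma continuous_dpair {n : ℕ} (h δ : ℝ) (k : Fin n) (c : Fin n → ℕ) :
    Continuous (dpair h δ k c) := by
  apply Continuous.mul
  · exact ((continuous_theta h δ (c k)).comp (EuclideanSpace.proj (𝕜 := ℝ) k).continuous).sub
      ((continuous_theta h δ (c k)).comp
        ((EuclideanSpace.proj (𝕜 := ℝ) k).continuous.sub continuous_const))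
  · exact continuous_finset_prod _ fun i _ =>
      (continuous_theta h δ (c i)).comp (EuclideanSpace.proj (𝕜 := ℝ) i).continuous

lemma theta_pos_mem {h δ t : ℝ} {c : ℕ} (hδ : 0 < δ) (ht : theta h δ c t ≠ 0) :
    c*h + δ < t ∧ t < (c+1)*h - δ := by
  constructor
  · by_contra hc; push_neg at hc; exact ht (theta_zero_left c hδ hc)
  · by_contra hc; push_neg at hc; exact ht (theta_zero_right c hδ hc)

lemma tent_pos_mem {h δ t : ℝ} {c : ℕ} (hδ : 0 < δ) (hh : 0 ≤ h) (ht : tent h δ c t ≠ 0) :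
    c*h + δ < t ∧ t < (c+2)*h - δ := by
  constructor
  · by_contra hc; push_neg at hc; exact ht (tent_zero_left c hδ hh hc)
  · by_contra hc; push_neg at hc; exact ht (tent_zero_right c hδ hh hc)

lemma fpair_ne_zero_facts {n : ℕ} {h δ : ℝ} {k : Fin n} {c : Fin n → ℕ} {x : Eucl' n}
    (hδ : 0 < δ) (hh : 0 ≤ h) (hx : fpair h δ k c x ≠ 0) :
    ((c k : ℝ)*h + δ < x k ∧ x k < ((c k : ℝ)+2)*h - δ) ∧
      ∀ i, i ≠ k → ((c i : ℝ)*h + δ < x i ∧ x i < ((c i : ℝ)+1)*h - δ) := by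
  rw [fpair, Finset.prod_ne_zero_iff] at hx
  constructor
  · have := hx k (Finset.mem_univ k)
    rw [fp1, if_pos rfl] at this
    exact tent_pos_mem hδ hh this
  · intro i hik
    have := hx i (Finset.mem_univ i)
    rw [fp1, if_neg hik] at this
    exact theta_pos_mem hδ this

lemma tsupport_fpair_subset {n : ℕ} {h δ : ℝ} (k : Fin n) (c : Fin n → ℕ)
    (hδ : 0 < δ) (hh : 0 ≤ h) :
    tsupport (fpair h δ k c) ⊆
      box (fun i => (c i : ℝ)*h + δ)
        (fun i => ((c i : ℝ) + if i = k then 2 else 1)*h - δ) := by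
  apply closure_minimal _ (isClosed_box _ _)
  intro x hx
  obtain ⟨hk, hne⟩ := fpair_ne_zero_facts hδ hh hx
  intro i
  rcases eq_or_ne i k with rfl | hik
  · simp only [if_pos rfl]; exact ⟨hk.1.le, hk.2.le⟩
  · simp only [if_neg hik]; exact ⟨(hne i hik).1.le, (hne i hik).2.le⟩

/-! ### cells, indicators, null boundaries -/

def ocell {n : ℕ} (h : ℝ) (c : Fin n → ℕ) : Set (Eucl' n) :=
  {x | ∀ i, x i ∈ Ioo ((c i : ℝ)*h) (((c i : ℝ)+1)*h)}

def ccell {n : ℕ} (h : ℝ) (c : Fin n → ℕ) : Set (Eucl' n) :=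
  {x | ∀ i, x i ∈ Icc ((c i : ℝ)*h) (((c i : ℝ)+1)*h)}

lemma measurableSet_ocell {n : ℕ} (h : ℝ) (c : Fin n → ℕ) : MeasurableSet (ocell h c) := by
  have : ocell h c = ⋂ i, (EuclideanSpace.proj (𝕜 := ℝ) i) ⁻¹' (Ioo ((c i : ℝ)*h) (((c i : ℝ)+1)*h)) := by
    ext x; simp [ocell, EuclideanSpace.proj, Set.mem_iInter]
  rw [this]
  exact MeasurableSet.iInter fun i =>
    measurableSet_Ioo.preimage (EuclideanSpace.proj (𝕜 := ℝ) i).continuous.measurable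

lemma slice_null {n : ℕ} (i : Fin n) (r : ℝ) : volume {x : Eucl' n | x i = r} = 0 := by
  have hmp := EuclideanSpace.volume_preserving_symm_measurableEquiv_toLp (Fin n)
  have hset : {x : Eucl' n | x i = r}
      = (MeasurableEquiv.toLp 2 (Fin n → ℝ)).symm ⁻¹' (univ.pi (Function.update (fun _ : Fin n => (univ : Set ℝ)) i {r})) := by
    ext x
    simp only [Set.mem_preimage, MeasurableEquiv.coe_toLp_symm, Set.mem_pi, Set.mem_univ, forall_true_left, Set.mem_setOf_eq]
    constructor
    · intro hx j
      rcases eq_or_ne j i with rfl | hj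
      · simp only [Function.update_self, Set.mem_singleton_iff]; exact hx
      · simp [Function.update_of_ne hj]
    · intro hx
      have := hx i
      simpa [Function.update_self] using this
  rw [hset, hmp.measure_preimage]
  · rw [MeasureTheory.volume_pi_pi]
    apply Finset.prod_eq_zero (Finset.mem_univ i)
    simp [Function.update_self]
  · apply MeasurableSet.nullMeasurableSet
    apply MeasurableSet.univ_pi
    intro j
    rcases eq_or_ne j i with rfl | hj
    · simp [Function.update_self]
    · simp [Function.update_of_ne hj]

lemma ccell_ae_ocell {n : ℕ} (h : ℝ) (c : Fin n → ℕ) : ccell h c =ᵐ[volume] ocell h c := by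
  rw [Filter.eventuallyEq_set]
  have hnull : volume (⋃ i : Fin n, ({x : Eucl' n | x i = (c i : ℝ)*h} ∪ {x | x i = ((c i : ℝ)+1)*h})) = 0 := by
    rw [MeasureTheory.measure_iUnion_null_iff]
    intro i
    exact MeasureTheory.measure_union_null (slice_null i _) (slice_null i _)
  apply MeasureTheory.ae_iff.2
  apply MeasureTheory.measure_mono_null _ hnull
  intro x hx
  simp only [Set.mem_setOf_eq] at hx
  have hx' : x ∈ ccell h c ∧ x ∉ ocell h c := by
    by_cases h1 : x ∈ ccell h c
    · refine ⟨h1, fun h2 => hx ?_⟩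
      simp [h1, h2]
    · exfalso
      apply hx
      have h2 : x ∉ ocell h c := fun h2 => h1 (fun i => ⟨(h2 i).1.le, (h2 i).2.le⟩)
      simp [h1, h2]
  obtain ⟨h1, h2⟩ := hx'
  simp only [ocell, Set.mem_setOf_eq, not_forall] at h2
  obtain ⟨i, hi⟩ := h2
  have hcc := h1 i
  rw [Set.mem_Ioo] at hi
  rw [Set.mem_Icc] at hcc
  apply Set.mem_iUnion.2 ⟨i, ?_⟩
  rcases not_and_or.1 hi with h' | h'
  · push_neg at h'
    left; exact le_antisymm h' hcc.1
  · push_neg at h'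
    right; exact le_antisymm hcc.2 h'

lemma prod_indicator_cells {n : ℕ} (h : ℝ) (c : Fin n → ℕ) (x : Eucl' n) :
    ∏ i, (Ioo ((c i : ℝ)*h) (((c i : ℝ)+1)*h)).indicator (fun _ => (1:ℝ)) (x i)
      = (ocell h c).indicator (fun _ => (1:ℝ)) x := by
  by_cases hx : x ∈ ocell h c
  · rw [Set.indicator_of_mem hx]
    exact Finset.prod_eq_one fun i _ => Set.indicator_of_mem (hx i) _
  · rw [Set.indicator_of_notMem hx]
    simp only [ocell, Set.mem_setOf_eq, not_forall] at hx
    obtain ⟨i, hi⟩ := hx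
    exact Finset.prod_eq_zero (Finset.mem_univ i) (Set.indicator_of_notMem hi _)

lemma cell_unique_1d {h : ℝ} (hh : 0 < h) {a b : ℕ} {t : ℝ}
    (ha : (a:ℝ)*h < t ∧ t ≤ ((a:ℝ)+1)*h) (hb : (b:ℝ)*h < t ∧ t ≤ ((b:ℝ)+1)*h) : a = b := by
  by_contra hab
  rcases Nat.lt_or_ge a b with h' | h'
  · have : ((a:ℝ)+1) ≤ (b:ℝ) := by exact_mod_cast h'
    nlinarith [ha.2, hb.1]
  · have h'' : b < a := lt_of_le_of_ne h' (Ne.symm hab)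
    have : ((b:ℝ)+1) ≤ (a:ℝ) := by exact_mod_cast h''
    nlinarith [hb.2, ha.1]

lemma ind_shift {a b h t : ℝ} :
    (Ioo a b).indicator (fun _ => (1:ℝ)) (t - h)
      = (Ioo (a+h) (b+h)).indicator (fun _ => (1:ℝ)) t := by
  by_cases ht : t - h ∈ Ioo a b
  · rw [Set.indicator_of_mem ht, Set.indicator_of_mem]
    rw [Set.mem_Ioo] at ht ⊢; exact ⟨by linarith [ht.1], by linarith [ht.2]⟩
  · rw [Set.indicator_of_notMem ht, Set.indicator_of_notMem]
    intro hc; apply ht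
    rw [Set.mem_Ioo] at hc ⊢; exact ⟨by linarith [hc.1], by linarith [hc.2]⟩

lemma dpair_tendsto {n : ℕ} {h : ℝ} (hh : 0 < h) (k : Fin n) (c : Fin n → ℕ) (x : Eucl' n) :
    Filter.Tendsto (fun m => dpair h (dseq h m) k c x) atTop
      (nhds ((ocell h c).indicator (fun _ => (1:ℝ)) x
          - (ocell h (fun i => if i = k then c k + 1 else c i)).indicator (fun _ => (1:ℝ)) x)) := by
  classical
  set c' : Fin n → ℕ := fun i => if i = k then c k + 1 else c i with hc'
  have hA := theta_tendsto hh (c k) (x k)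
  have hB := theta_tendsto hh (c k) (x k - h)
  have hP := tendsto_finset_prod (f := fun i m => theta h (dseq h m) (c i) (x i))
    (x := atTop) (a := fun i => (Ioo ((c i : ℝ)*h) (((c i : ℝ)+1)*h)).indicator (fun _ => (1:ℝ)) (x i))
    (Finset.univ.erase k) (fun i _ => by
      exact theta_tendsto hh (c i) (x i))
  have hprod := (hA.sub hB).mul hP
  have e1 : Set.indicator (Ioo ((c k : ℝ)*h) (((c k : ℝ)+1)*h)) (1 : ℝ → ℝ) (x k - h)
      = (Ioo ((c' k : ℝ)*h) (((c' k : ℝ)+1)*h)).indicator (fun _ => (1:ℝ)) (x k) := by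
    rw [show (Set.indicator (Ioo ((c k : ℝ)*h) (((c k : ℝ)+1)*h)) (1 : ℝ → ℝ) (x k - h))
        = (Ioo ((c k : ℝ)*h) (((c k : ℝ)+1)*h)).indicator (fun _ => (1:ℝ)) (x k - h) from rfl]
    rw [ind_shift]
    have h1 : (c k : ℝ)*h + h = ((c' k : ℝ))*h := by
      simp only [hc', if_pos rfl]; push_cast; ring
    have h2 : ((c k : ℝ)+1)*h + h = ((c' k : ℝ)+1)*h := by
      simp only [hc', if_pos rfl]; push_cast; ring
    rw [h1, h2]
  have e2 : ∀ d : Fin n → ℕ,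
      (Ioo ((d k : ℝ)*h) (((d k : ℝ)+1)*h)).indicator (fun _ => (1:ℝ)) (x k)
        * ∏ i ∈ Finset.univ.erase k, (Ioo ((d i : ℝ)*h) (((d i : ℝ)+1)*h)).indicator (fun _ => (1:ℝ)) (x i)
      = (ocell h d).indicator (fun _ => (1:ℝ)) x := by
    intro d
    rw [Finset.mul_prod_erase Finset.univ
      (fun i => (Ioo ((d i : ℝ)*h) (((d i : ℝ)+1)*h)).indicator (fun _ => (1:ℝ)) (x i))
      (Finset.mem_univ k)]
    exact prod_indicator_cells h d x
  have e3 : ∀ i ∈ Finset.univ.erase k,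
      (Ioo ((c i : ℝ)*h) (((c i : ℝ)+1)*h)).indicator (fun _ => (1:ℝ)) (x i)
        = (Ioo ((c' i : ℝ)*h) (((c' i : ℝ)+1)*h)).indicator (fun _ => (1:ℝ)) (x i) := by
    intro i hi
    simp only [hc', if_neg (Finset.ne_of_mem_erase hi)]
  have heq : (ocell h c).indicator (fun _ => (1:ℝ)) x - (ocell h c').indicator (fun _ => (1:ℝ)) x
      = ((Set.indicator (Ioo ((c k : ℝ)*h) (((c k : ℝ)+1)*h)) (1 : ℝ → ℝ) (x k)
          - Set.indicator (Ioo ((c k : ℝ)*h) (((c k : ℝ)+1)*h)) (1 : ℝ → ℝ) (x k - h)) *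
        ∏ i ∈ Finset.univ.erase k,
          (Ioo ((c i : ℝ)*h) (((c i : ℝ)+1)*h)).indicator (fun _ => (1:ℝ)) (x i)) := by
    rw [sub_mul]
    rw [show Set.indicator (Ioo ((c k : ℝ)*h) (((c k : ℝ)+1)*h)) (1 : ℝ → ℝ) (x k)
        = (Ioo ((c k : ℝ)*h) (((c k : ℝ)+1)*h)).indicator (fun _ => (1:ℝ)) (x k) from rfl]
    rw [e2 c]
    rw [e1, Finset.prod_congr rfl e3, e2 c']
  rw [heq]
  exact hprod

/-! ### the test vector tfield -/

noncomputable def tfield {n : ℕ} (P : ℕ) (b : ℕ → ℝ) (k : ℕ → Fin n) (c : ℕ → Fin n → ℕ)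
    (h δ : ℝ) : Eucl' n → Eucl' n := fun y =>
  ∑ j ∈ Finset.range P, (b j * fpair h δ (k j) (c j) y) • EuclideanSpace.single (k j) (1:ℝ)

lemma contDiff_tfield {n : ℕ} (P : ℕ) (b : ℕ → ℝ) (k : ℕ → Fin n) (c : ℕ → Fin n → ℕ)
    (h δ : ℝ) : ContDiff ℝ 1 (tfield P b k c h δ) := by
  apply ContDiff.sum
  intro j _
  exact (contDiff_const.mul (contDiff_fpair h δ (k j) (c j))).smul contDiff_const

lemma divg_tfield {n : ℕ} (P : ℕ) (b : ℕ → ℝ) (k : ℕ → Fin n) (c : ℕ → Fin n → ℕ)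
    (h δ : ℝ) (x : Eucl' n) :
    divg (tfield P b k c h δ) x = ∑ j ∈ Finset.range P, b j * dpair h δ (k j) (c j) x := by
  classical
  have hD : ∀ j, HasFDerivAt
      (fun y => (b j * fpair h δ (k j) (c j) y) • EuclideanSpace.single (k j) (1:ℝ))
      (((b j) • (fderiv ℝ (fpair h δ (k j) (c j)) x)).smulRight (EuclideanSpace.single (k j) 1)) x := by
    intro j
    have h1 : HasFDerivAt (fpair h δ (k j) (c j)) (fderiv ℝ (fpair h δ (k j) (c j)) x) x :=
      (fpair_hasFDerivAt h δ (k j) (c j) x).differentiableAt.hasFDerivAt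
    exact (h1.const_mul (b j)).smul_const _
  have hsum : HasFDerivAt (tfield P b k c h δ)
      (∑ j ∈ Finset.range P,
        ((b j) • (fderiv ℝ (fpair h δ (k j) (c j)) x)).smulRight (EuclideanSpace.single (k j) 1)) x :=
    HasFDerivAt.fun_sum (fun j _ => hD j)
  rw [divg, hsum.fderiv]
  have key : ∀ i : Fin n,
      ((∑ j ∈ Finset.range P,
        ((b j) • (fderiv ℝ (fpair h δ (k j) (c j)) x)).smulRight (EuclideanSpace.single (k j) 1))
          (EuclideanSpace.single i 1)) i
      = ∑ j ∈ Finset.range P,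
          (b j * (fderiv ℝ (fpair h δ (k j) (c j)) x (EuclideanSpace.single i 1)))
            * (if i = k j then 1 else 0) := by
    intro i
    rw [ContinuousLinearMap.sum_apply]
    rw [WithLp.ofLp_sum, Finset.sum_apply]
    apply Finset.sum_congr rfl
    intro j _
    rw [ContinuousLinearMap.smulRight_apply, ContinuousLinearMap.smul_apply]
    rw [PiLp.smul_apply, EuclideanSpace.single_apply]
    try simp only [smul_eq_mul]
    try ring
  rw [Finset.sum_congr rfl (fun i _ => key i)]
  rw [Finset.sum_comm]
  apply Finset.sum_congr rfl
  intro j _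
  rw [Finset.sum_eq_single (k j)]
  · rw [if_pos rfl, fpair_fderiv_single, mul_one]
  · intro i _ hik
    rw [if_neg hik, mul_zero]
  · intro hki
    exact absurd (Finset.mem_univ _) hki

/-! ### the counting bound -/

lemma box_subset_opencube {n : ℕ} {L : ℝ} {lo hi : Fin n → ℝ}
    (hlo : ∀ i, 0 < lo i) (hhi : ∀ i, hi i < L) :
    box lo hi ⊆ opencube n L :=
  fun x hx i => ⟨lt_of_lt_of_le (hlo i) (hx i).1, lt_of_le_of_lt (hx i).2 (hhi i)⟩

lemma ocell_subset_opencube {n N : ℕ} {L h : ℝ} (hh : 0 < h) (hLh : (N:ℝ)*h = L)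
    (d : Fin n → Fin N) : ocell h (fun i => (d i : ℕ)) ⊆ opencube n L := by
  intro x hx i
  have h1 := (hx i).1
  have h2 := (hx i).2
  constructor
  · have : (0:ℝ) ≤ ((d i : ℕ):ℝ)*h := mul_nonneg (Nat.cast_nonneg _) hh.le
    linarith
  · have hdN : ((d i : ℕ):ℝ) + 1 ≤ (N:ℝ) := by exact_mod_cast (d i).isLt
    have : (((d i : ℕ):ℝ)+1)*h ≤ (N:ℝ)*h := mul_le_mul_of_nonneg_right hdN hh.le
    linarith

lemma sum_abs_fpair_le {n N : ℕ} {h δ : ℝ} (hh : 0 < h) (hδ : 0 < δ)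
    (P : ℕ) (κ : ℕ → (Fin n → Fin N)) (K : ℕ → Fin n)
    (hinj : ∀ j j', j ≤ P → j' ≤ P → κ j = κ j' → j = j')
    (hK : ∀ j, j < P → ∃ hk : (κ j (K j) : ℕ) + 1 < N,
      κ (j+1) = Function.update (κ j) (K j) ⟨(κ j (K j) : ℕ)+1, hk⟩)
    (x : Eucl' n) :
    ∑ j ∈ Finset.range P, |fpair h δ (K j) (fun i => (κ j i : ℕ)) x| ≤ 2 * h := by
  classical
  set f : ℕ → ℝ := fun j => fpair h δ (K j) (fun i => (κ j i : ℕ)) x with hf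
  set S : Finset ℕ := (Finset.range P).filter (fun j => f j ≠ 0) with hS
  have hsum : ∑ j ∈ Finset.range P, |f j| = ∑ j ∈ S, |f j| := by
    symm
    apply Finset.sum_filter_of_ne
    intro j _ hj
    exact fun h0 => hj (by rw [h0, abs_zero])
  rw [hsum]
  by_cases hSe : S = ∅
  · rw [hSe]; simp; positivity
  -- S is nonempty : pick j₀ and build the unique grid cell containing x
  obtain ⟨j₀, hj₀⟩ := Finset.nonempty_of_ne_empty hSe
  have hj₀P : j₀ < P := Finset.mem_range.1 (Finset.mem_filter.1 hj₀).1
  have hj₀f : f j₀ ≠ 0 := (Finset.mem_filter.1 hj₀).2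
  obtain ⟨hk₀, _⟩ := hK j₀ hj₀P
  -- facts for j₀
  obtain ⟨hx₀k, hx₀ne⟩ := fpair_ne_zero_facts hδ hh.le hj₀f
  set a₀ : ℕ := (κ j₀ (K j₀) : ℕ) with ha₀
  -- the cell
  set cc : Fin n → Fin N := fun i => if i = K j₀ then
      (if x (K j₀) ≤ ((a₀:ℝ)+1)*h then ⟨a₀, (κ j₀ (K j₀)).isLt⟩ else ⟨a₀+1, hk₀⟩)
    else κ j₀ i with hcc
  have hQ : ∀ i, ((cc i : ℕ):ℝ)*h < x i ∧ x i ≤ (((cc i : ℕ):ℝ)+1)*h := by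
    intro i
    by_cases hik : i = K j₀
    · have hxi : x i = x (K j₀) := by rw [hik]
      simp only [hcc, if_pos hik]
      by_cases hcase : x (K j₀) ≤ ((a₀:ℝ)+1)*h
      · rw [if_pos hcase]
        constructor
        · show ((a₀:ℝ))*h < x i
          rw [hxi]; linarith [hx₀k.1, hδ]
        · show x i ≤ ((a₀:ℝ)+1)*h
          rw [hxi]; exact hcase
      · rw [if_neg hcase]
        push_neg at hcase
        constructor
        · show ((a₀+1 : ℕ):ℝ)*h < x i
          rw [hxi]; push_cast; linarith
        · show x i ≤ (((a₀+1 : ℕ):ℝ)+1)*h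
          have := hx₀k.2
          rw [hxi]; push_cast; linarith [hδ]
    · simp only [hcc, if_neg hik]
      obtain ⟨h1, h2⟩ := hx₀ne i hik
      exact ⟨by linarith, by linarith⟩
  -- every pair in S has cc among its two cubes
  have hclaim : ∀ j ∈ S, κ j = cc ∨ κ (j+1) = cc := by
    intro j hjS
    have hjP : j < P := Finset.mem_range.1 (Finset.mem_filter.1 hjS).1
    have hjf : f j ≠ 0 := (Finset.mem_filter.1 hjS).2
    obtain ⟨hxk, hxne⟩ := fpair_ne_zero_facts hδ hh.le hjf
    obtain ⟨hkj, hupd⟩ := hK j hjP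
    set a : ℕ := (κ j (K j) : ℕ) with ha
    -- coordinates other than K j agree
    have hother : ∀ i, i ≠ K j → cc i = κ j i := by
      intro i hik
      obtain ⟨h1, h2⟩ := hxne i hik
      have hQi := hQ i
      have hv : ((cc i : ℕ)) = ((κ j i : ℕ)) := by
        apply cell_unique_1d hh hQi
        exact ⟨by linarith, by linarith⟩
      exact Fin.val_injective hv
    -- coordinate K j : cc (K j) ∈ {a, a+1}
    have hKcase : ((cc (K j) : ℕ)) = a ∨ ((cc (K j) : ℕ)) = a + 1 := by
      obtain ⟨h1, h2⟩ := hQ (K j)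
      obtain ⟨h3, h4⟩ := hxk
      have hlt : ((cc (K j) : ℕ):ℝ) < (a:ℝ) + 2 := by
        by_contra hcon
        push_neg at hcon
        have : ((a:ℝ)+2)*h ≤ ((cc (K j) : ℕ):ℝ)*h := mul_le_mul_of_nonneg_right hcon hh.le
        simp only [← ha] at h4
        linarith
      have hge : (a:ℝ) < ((cc (K j) : ℕ):ℝ) + 1 := by
        by_contra hcon
        push_neg at hcon
        have : ((cc (K j) : ℕ):ℝ)*h + h ≤ (a:ℝ)*h := by nlinarith
        linarith
      have hlt' : ((cc (K j) : ℕ)) < a + 2 := by exact_mod_cast hlt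
      have hge' : a < ((cc (K j) : ℕ)) + 1 := by exact_mod_cast hge
      omega
    rcases hKcase with hc | hc
    · left
      funext i
      rcases eq_or_ne i (K j) with rfl | hik
      · exact (Fin.val_injective (show ((cc (K j) : ℕ)) = ((κ j (K j) : ℕ)) from hc)).symm
      · exact (hother i hik).symm
    · right
      rw [hupd]
      funext i
      rcases eq_or_ne i (K j) with rfl | hik
      · rw [Function.update_self]
        exact (Fin.val_injective (show ((cc (K j) : ℕ)) = a + 1 from hc)).symm
      · rw [Function.update_of_ne hik]
        exact (hother i hik).symm
  -- hence S has at most 2 elements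
  have hcard : S.card ≤ 2 := by
    have hsub : S ⊆ S.filter (fun j => κ j = cc) ∪ S.filter (fun j => κ (j+1) = cc) := by
      intro j hj
      rcases hclaim j hj with h' | h'
      · exact Finset.mem_union_left _ (Finset.mem_filter.2 ⟨hj, h'⟩)
      · exact Finset.mem_union_right _ (Finset.mem_filter.2 ⟨hj, h'⟩)
    calc S.card ≤ (S.filter (fun j => κ j = cc) ∪ S.filter (fun j => κ (j+1) = cc)).card :=
        Finset.card_le_card hsub
      _ ≤ (S.filter (fun j => κ j = cc)).card + (S.filter (fun j => κ (j+1) = cc)).card :=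
        Finset.card_union_le _ _
      _ ≤ 1 + 1 := by
        apply Nat.add_le_add
        · apply Finset.card_le_one.2
          intro j1 hj1 j2 hj2
          have e1 := (Finset.mem_filter.1 hj1).2
          have e2 := (Finset.mem_filter.1 hj2).2
          have p1 : j1 < P := Finset.mem_range.1 (Finset.mem_filter.1 (Finset.mem_filter.1 hj1).1).1
          have p2 : j2 < P := Finset.mem_range.1 (Finset.mem_filter.1 (Finset.mem_filter.1 hj2).1).1
          exact hinj j1 j2 p1.le p2.le (e1.trans e2.symm)
        · apply Finset.card_le_one.2
          intro j1 hj1 j2 hj2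
          have e1 := (Finset.mem_filter.1 hj1).2
          have e2 := (Finset.mem_filter.1 hj2).2
          have p1 : j1 < P := Finset.mem_range.1 (Finset.mem_filter.1 (Finset.mem_filter.1 hj1).1).1
          have p2 : j2 < P := Finset.mem_range.1 (Finset.mem_filter.1 (Finset.mem_filter.1 hj2).1).1
          have := hinj (j1+1) (j2+1) p1 p2 (e1.trans e2.symm)
          omega
      _ = 2 := rfl
  -- conclude
  calc ∑ j ∈ S, |f j| ≤ ∑ j ∈ S, h := by
        apply Finset.sum_le_sum
        intro j _
        rw [abs_of_nonneg (fpair_nonneg hh.le δ _ _ x)]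
        exact fpair_le hh.le δ _ _ x
    _ = S.card * h := by rw [Finset.sum_const, nsmul_eq_mul]
    _ ≤ 2 * h := by
        apply mul_le_mul_of_nonneg_right _ hh.le
        exact_mod_cast hcard

/-- If `u` has bounded variation on `(0,L)^n` with `|Du|((0,L)^n) ≤ V`, and
`κ⁰, κ¹, …, κ^{N^n - 1}` is an enumeration of `{0,…,N-1}^n` in which consecutive indices
differ by addition of a standard basis vector, then the averages along the enumeration
satisfy `∑ |u_{κ^{j+1}} - u_{κ^j}| ≤ 2V (N/L)^{n-1}`. -/
theorem sum_avg_diff_le (n N : ℕ) (hn : 1 ≤ n) (hN : 0 < N) (L V : ℝ)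
    (hL : 0 < L) (hV : 0 < V)
    (u : Eucl n → ℝ) (hu_int : IntegrableOn u (opencube n L))
    (hu_bv : ∀ v ∈ testIntegrals u (opencube n L), v ≤ V)
    (κ : ℕ → (Fin n → Fin N))
    (henum : ∀ ι : Fin n → Fin N, ∃! j : ℕ, j < N ^ n ∧ κ j = ι)
    (hstep : ∀ j : ℕ, j + 1 < N ^ n → ∃ (k : Fin n) (hk : (κ j k : ℕ) + 1 < N),
      κ (j + 1) = Function.update (κ j) k ⟨(κ j k : ℕ) + 1, hk⟩) :
    ∑ j ∈ Finset.range (N ^ n - 1), |cubeAvg n N L u (κ (j + 1)) - cubeAvg n N L u (κ j)| ≤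
      2 * V * ((N : ℝ) / L) ^ (n - 1) := by
  
  classical
  have hNn : 0 < N ^ n := Nat.pow_pos hN
  set P : ℕ := N ^ n - 1 with hPdef
  have hNP : P + 1 = N ^ n := by omega
  have hRHS0 : (0:ℝ) ≤ 2 * V * ((N : ℝ) / L) ^ (n - 1) :=
    mul_nonneg (mul_nonneg (by norm_num) hV.le) (pow_nonneg (div_nonneg (Nat.cast_nonneg N) hL.le) _)
  rcases Nat.eq_zero_or_pos P with hP0 | hPpos
  · rw [hP0]
    simpa using hRHS0
  set h : ℝ := L / N with hhdef
  have hNne : (N:ℝ) ≠ 0 := Nat.cast_ne_zero.2 hN.ne'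
  have hh : 0 < h := div_pos hL (by exact_mod_cast hN)
  have hLh : (N:ℝ) * h = L := by rw [hhdef]; field_simp
  have hinj : ∀ j j', j ≤ P → j' ≤ P → κ j = κ j' → j = j' := by
    intro j j' hj hj' he
    obtain ⟨j0, _, huniq⟩ := henum (κ j)
    have h1 := huniq j ⟨by omega, rfl⟩
    have h2 := huniq j' ⟨by omega, he.symm⟩
    omega
  set K : ℕ → Fin n := fun j => if hj : j + 1 < N ^ n then (hstep j hj).choose else ⟨0, hn⟩
    with hKdef
  have hK : ∀ j, j < P → ∃ hk : (κ j (K j) : ℕ) + 1 < N,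
      κ (j+1) = Function.update (κ j) (K j) ⟨(κ j (K j) : ℕ)+1, hk⟩ := by
    intro j hj
    have hj1 : j + 1 < N ^ n := by omega
    have hKj : K j = (hstep j hj1).choose := by simp only [hKdef, dif_pos hj1]
    rw [hKj]
    exact (hstep j hj1).choose_spec
  set c : ℕ → Fin n → ℕ := fun j i => (κ j i : ℕ) with hcdef
  set Ω := opencube n L with hΩdef
  set I : ℕ → ℝ := fun j => ∫ x in ocell h (c j), u x with hIdef
  have hIsub : ∀ j, (∫ x in subcube n N L (κ j), u x) = I j := by
    intro j
    apply MeasureTheory.setIntegral_congr_set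
    exact ccell_ae_ocell h (c j)
  have hocellsub : ∀ j, ocell h (c j) ⊆ Ω := fun j => ocell_subset_opencube hh hLh (κ j)
  set s : ℕ → ℝ := fun j => if I j < I (j+1) then -1 else 1 with hsdef
  set b : ℕ → ℝ := fun j => (2*h)⁻¹ * s j with hbdef
  have habs_s : ∀ j, |s j| = 1 := by
    intro j
    simp only [hsdef]
    split <;> simp
  have habs_b : ∀ j, |b j| = (2*h)⁻¹ := by
    intro j
    simp only [hbdef, abs_mul, habs_s j, mul_one]
    rw [abs_of_nonneg (by positivity)]
  set A : ℕ → ℕ → ℝ := fun m j => ∫ x in Ω, dpair h (dseq h m) (K j) (c j) x * u x with hAdef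
  have hint : ∀ m j, IntegrableOn (fun x => dpair h (dseq h m) (K j) (c j) x * u x) Ω := by
    intro m j
    apply MeasureTheory.Integrable.bdd_mul (c := 1) hu_int
      ((continuous_dpair _ _ _ _).aestronglyMeasurable)
    exact Filter.Eventually.of_forall (fun x => by rw [Real.norm_eq_abs]; exact abs_dpair_le_one _ _ _ _ _)
  -- each v m is a test integral, hence ≤ V
  have hvV : ∀ m, ∑ j ∈ Finset.range P, b j * A m j ≤ V := by
    intro m
    have hδ : 0 < dseq h m := dseq_pos hh m
    set δ := dseq h m with hδdef
    -- pointwise identity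
    have hdiv : ∀ x, u x * divg (tfield P b K c h δ) x
        = ∑ j ∈ Finset.range P, b j * (dpair h δ (K j) (c j) x * u x) := by
      intro x
      rw [divg_tfield, mul_comm, Finset.sum_mul]
      exact Finset.sum_congr rfl fun j _ => by ring
    have hveq : (∫ x in Ω, u x * divg (tfield P b K c h δ) x)
        = ∑ j ∈ Finset.range P, b j * A m j := by
      rw [MeasureTheory.integral_congr_ae (Filter.Eventually.of_forall hdiv)]
      rw [MeasureTheory.integral_finset_sum _
        (fun j _ => ((hint m j).const_mul (b j)))]
      exact Finset.sum_congr rfl fun j _ => by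
        rw [MeasureTheory.integral_const_mul]
    apply hu_bv
    refine ⟨tfield P b K c h δ, contDiff_tfield _ _ _ _ _ _, ?_, ?_, ?_, hveq.symm⟩
    -- support facts
    · -- HasCompactSupport
      have hBc : IsCompact (⋃ j ∈ Finset.range P,
          box (fun i => (c j i : ℝ)*h + δ)
            (fun i => ((c j i : ℝ) + if i = K j then 2 else 1)*h - δ)) :=
        (Finset.range P).finite_toSet.isCompact_biUnion fun j _ => isCompact_box _ _
      apply IsCompact.of_isClosed_subset hBc (isClosed_tsupport _)
      apply closure_minimal _ (hBc.isClosed)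
      intro x hx
      have hex : ∃ j ∈ Finset.range P, fpair h δ (K j) (c j) x ≠ 0 := by
        by_contra hcon
        push_neg at hcon
        apply hx
        show tfield P b K c h δ x = 0
        rw [tfield]
        apply Finset.sum_eq_zero
        intro j hj
        rw [hcon j hj, mul_zero, zero_smul]
      obtain ⟨j, hjP, hj⟩ := hex
      apply Set.mem_biUnion hjP
      exact tsupport_fpair_subset (K j) (c j) hδ hh.le (subset_closure hj)
    · -- tsupport ⊆ Ω
      have hBsub : (⋃ j ∈ Finset.range P,
          box (fun i => (c j i : ℝ)*h + δ)
            (fun i => ((c j i : ℝ) + if i = K j then 2 else 1)*h - δ)) ⊆ Ω := by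
        apply Set.iUnion₂_subset
        intro j hjP
        apply box_subset_opencube
        · intro i
          have : (0:ℝ) ≤ (c j i : ℝ)*h := mul_nonneg (Nat.cast_nonneg _) hh.le
          linarith
        · intro i
          have hc2 : ((c j i : ℝ) + if i = K j then 2 else 1) ≤ (N:ℝ) := by
            by_cases hik : i = K j
            · rw [if_pos hik]
              obtain ⟨hk, _⟩ := hK j (Finset.mem_range.1 hjP)
              rw [hik]
              have : (c j (K j)) + 2 ≤ N := hk
              exact_mod_cast this
            · rw [if_neg hik]
              have : (c j i) + 1 ≤ N := (κ j i).isLt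
              exact_mod_cast this
          have : ((c j i : ℝ) + if i = K j then 2 else 1)*h ≤ (N:ℝ)*h :=
            mul_le_mul_of_nonneg_right hc2 hh.le
          rw [hLh] at this
          linarith
      refine subset_trans ?_ hBsub
      apply closure_minimal _ (isClosed_biUnion_finset fun j _ => isClosed_box _ _)
      intro x hx
      have hex : ∃ j ∈ Finset.range P, fpair h δ (K j) (c j) x ≠ 0 := by
        by_contra hcon
        push_neg at hcon
        apply hx
        show tfield P b K c h δ x = 0
        rw [tfield]
        apply Finset.sum_eq_zero
        intro j hj
        rw [hcon j hj, mul_zero, zero_smul]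
      obtain ⟨j, hjP, hj⟩ := hex
      apply Set.mem_biUnion hjP
      exact tsupport_fpair_subset (K j) (c j) hδ hh.le (subset_closure hj)
    · -- norm bound
      intro x
      have h1 : ‖tfield P b K c h δ x‖
          ≤ ∑ j ∈ Finset.range P, ‖(b j * fpair h δ (K j) (c j) x) • EuclideanSpace.single (K j) (1:ℝ)‖ :=
        norm_sum_le _ _
      have h2 : ∀ j, ‖(b j * fpair h δ (K j) (c j) x) • EuclideanSpace.single (K j) (1:ℝ)‖
          = (2*h)⁻¹ * |fpair h δ (K j) (c j) x| := by
        intro j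
        rw [norm_smul, EuclideanSpace.norm_single, norm_one, mul_one, Real.norm_eq_abs,
          abs_mul, habs_b j]
      calc ‖tfield P b K c h δ x‖
          ≤ ∑ j ∈ Finset.range P, (2*h)⁻¹ * |fpair h δ (K j) (c j) x| := by
            rw [← Finset.sum_congr rfl (fun j _ => h2 j)]; exact h1
        _ = (2*h)⁻¹ * ∑ j ∈ Finset.range P, |fpair h δ (K j) (c j) x| := by
            rw [Finset.mul_sum]
        _ ≤ (2*h)⁻¹ * (2*h) := by
            apply mul_le_mul_of_nonneg_left _ (by positivity)
            exact sum_abs_fpair_le hh hδ P κ K hinj hK x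
        _ = 1 := by
            field_simp
  -- limits of A
  have hAtend : ∀ j, j < P → Filter.Tendsto (fun m => A m j) atTop (nhds (I j - I (j+1))) := by
    intro j hjP
    have hc' : (fun i => if i = K j then c j (K j) + 1 else c j i) = c (j+1) := by
      obtain ⟨hk, hupd⟩ := hK j hjP
      funext i
      show (if i = K j then (κ j (K j) : ℕ) + 1 else (κ j i : ℕ)) = (κ (j+1) i : ℕ)
      rw [hupd, Function.update_apply]
      by_cases hik : i = K j
      · rw [if_pos hik, if_pos hik]
      · rw [if_neg hik, if_neg hik]
    have hlim : ∀ x, Filter.Tendsto (fun m => dpair h (dseq h m) (K j) (c j) x * u x) atTop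
        (nhds (((ocell h (c j)).indicator (fun _ => (1:ℝ)) x
          - (ocell h (c (j+1))).indicator (fun _ => (1:ℝ)) x) * u x)) := by
      intro x
      have := (dpair_tendsto hh (K j) (c j) x).mul_const (u x)
      rwa [hc'] at this
    have hbound : ∀ m, ∀ᵐ x ∂(volume.restrict Ω),
        ‖dpair h (dseq h m) (K j) (c j) x * u x‖ ≤ |u x| := by
      intro m
      apply Filter.Eventually.of_forall
      intro x
      rw [Real.norm_eq_abs, abs_mul]
      calc |dpair h (dseq h m) (K j) (c j) x| * |u x| ≤ 1 * |u x| :=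
          mul_le_mul_of_nonneg_right (abs_dpair_le_one _ _ _ _ _) (abs_nonneg _)
        _ = |u x| := one_mul _
    have hdom := MeasureTheory.tendsto_integral_of_dominated_convergence
      (μ := volume.restrict Ω)
      (F := fun m x => dpair h (dseq h m) (K j) (c j) x * u x)
      (f := fun x => ((ocell h (c j)).indicator (fun _ => (1:ℝ)) x
        - (ocell h (c (j+1))).indicator (fun _ => (1:ℝ)) x) * u x)
      (fun x => |u x|)
      (fun m => (hint m j).aestronglyMeasurable)
      hu_int.abs
      hbound
      (Filter.Eventually.of_forall hlim)
    -- identify the limit integral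
    have hIset : ∀ j', (∫ x in Ω, (ocell h (c j')).indicator (fun _ => (1:ℝ)) x * u x) = I j' := by
      intro j'
      have hptw : ∀ x, (ocell h (c j')).indicator (fun _ => (1:ℝ)) x * u x
          = (ocell h (c j')).indicator u x := by
        intro x
        by_cases hx : x ∈ ocell h (c j')
        · rw [Set.indicator_of_mem hx, Set.indicator_of_mem hx, one_mul]
        · rw [Set.indicator_of_notMem hx, Set.indicator_of_notMem hx, zero_mul]
      rw [MeasureTheory.integral_congr_ae (Filter.Eventually.of_forall hptw)]
      rw [MeasureTheory.integral_indicator (measurableSet_ocell h (c j'))]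
      rw [MeasureTheory.Measure.restrict_restrict (measurableSet_ocell h (c j'))]
      rw [Set.inter_eq_left.2 (hocellsub j')]
    have hind_int : ∀ j', IntegrableOn
        (fun x => (ocell h (c j')).indicator (fun _ => (1:ℝ)) x * u x) Ω := by
      intro j'
      apply MeasureTheory.Integrable.bdd_mul (c := 1) hu_int
      · exact ((measurable_const.indicator (measurableSet_ocell h (c j'))).aestronglyMeasurable)
      · refine Filter.Eventually.of_forall (fun x => ?_)
        rw [Real.norm_eq_abs]
        by_cases hx : x ∈ ocell h (c j')
        · rw [Set.indicator_of_mem hx]; norm_num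
        · rw [Set.indicator_of_notMem hx]; norm_num
    have hlimint : (∫ x in Ω, ((ocell h (c j)).indicator (fun _ => (1:ℝ)) x
        - (ocell h (c (j+1))).indicator (fun _ => (1:ℝ)) x) * u x) = I j - I (j+1) := by
      have hsub : ∀ x, ((ocell h (c j)).indicator (fun _ => (1:ℝ)) x
          - (ocell h (c (j+1))).indicator (fun _ => (1:ℝ)) x) * u x
          = (ocell h (c j)).indicator (fun _ => (1:ℝ)) x * u x
            - (ocell h (c (j+1))).indicator (fun _ => (1:ℝ)) x * u x := fun x => by ring
      rw [MeasureTheory.integral_congr_ae (Filter.Eventually.of_forall hsub)]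
      rw [MeasureTheory.integral_sub (hind_int j) (hind_int (j+1))]
      rw [hIset j, hIset (j+1)]
    rw [← hlimint]
    exact hdom
  -- pass to the limit
  have hTend : Filter.Tendsto (fun m => ∑ j ∈ Finset.range P, b j * A m j) atTop
      (nhds (∑ j ∈ Finset.range P, b j * (I j - I (j+1)))) :=
    tendsto_finset_sum _ (fun j hj =>
      ((hAtend j (Finset.mem_range.1 hj)).const_mul (b j)))
  have hle : ∑ j ∈ Finset.range P, b j * (I j - I (j+1)) ≤ V :=
    le_of_tendsto hTend (Filter.Eventually.of_forall hvV)
  have hbI : ∀ j, b j * (I j - I (j+1)) = (2*h)⁻¹ * |I (j+1) - I j| := by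
    intro j
    by_cases hlt : I j < I (j+1)
    · simp only [hbdef, hsdef, if_pos hlt]
      rw [abs_of_pos (sub_pos.2 hlt)]
      ring
    · simp only [hbdef, hsdef, if_neg hlt]
      push_neg at hlt
      rw [abs_of_nonpos (by linarith)]
      ring
  have hsum_le : ∑ j ∈ Finset.range P, |I (j+1) - I j| ≤ 2*h*V := by
    have h2h : (0:ℝ) < 2*h := by positivity
    rw [Finset.sum_congr rfl (fun j _ => hbI j), ← Finset.mul_sum] at hle
    calc ∑ j ∈ Finset.range P, |I (j+1) - I j|
        = (2*h) * ((2*h)⁻¹ * ∑ j ∈ Finset.range P, |I (j+1) - I j|) := by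
          field_simp
      _ ≤ (2*h) * V := mul_le_mul_of_nonneg_left hle h2h.le
      _ = 2*h*V := rfl
  -- final computation
  have hAvg : ∀ j, |cubeAvg n N L u (κ (j+1)) - cubeAvg n N L u (κ j)|
      = ((N:ℝ)/L)^n * |I (j+1) - I j| := by
    intro j
    rw [cubeAvg, cubeAvg, hIsub j, hIsub (j+1), ← mul_sub, abs_mul,
      abs_of_nonneg (pow_nonneg (div_nonneg (Nat.cast_nonneg N) hL.le) _)]
  calc ∑ j ∈ Finset.range P, |cubeAvg n N L u (κ (j + 1)) - cubeAvg n N L u (κ j)|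
      = ((N:ℝ)/L)^n * ∑ j ∈ Finset.range P, |I (j+1) - I j| := by
        rw [Finset.mul_sum]
        exact Finset.sum_congr rfl fun j _ => hAvg j
    _ ≤ ((N:ℝ)/L)^n * (2*h*V) :=
        mul_le_mul_of_nonneg_left hsum_le
          (pow_nonneg (div_nonneg (Nat.cast_nonneg N) hL.le) _)
    _ = 2 * V * ((N:ℝ)/L)^(n-1) := by
        have hpow : ((N:ℝ)/L)^n = ((N:ℝ)/L)^(n-1) * ((N:ℝ)/L) := by
          conv_lhs => rw [show n = (n-1)+1 by omega]
          rw [pow_succ]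
        have hx : ((N:ℝ)/L) * h = 1 := by
          rw [hhdef]; field_simp
        calc ((N:ℝ)/L)^n * (2*h*V)
            = ((N:ℝ)/L)^(n-1) * (((N:ℝ)/L) * h) * (2*V) := by rw [hpow]; ring
          _ = 2 * V * ((N:ℝ)/L)^(n-1) := by rw [hx]; ring
end

section
/- Let n ≥ 1, L > 0, N ∈ ℕ, and h > 0. For δ = (δ_ι)_{ι ∈ {0,…,N−1}^n} with each δ_ι ∈ {0,1}, define u_δ : [0,L]^n → {0,h} by u_δ(x) = Σ_ι h·δ_ι·χ_{int(□_ι)}(x). Then u_δ is of bounded variation on (0,L)^n with |Du_δ|((0,L)^n) ≤ (2L)^{n−1}·N·h. In particular, if 0 < h ≤ min{M, V/(2^{n−1}·L^{n−1}·N)}, then u_δ ∈ F_{[L,M,V]} for every such δ. -/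
open MeasureTheory Set

/-- The function `u_δ = ∑_ι h δ_ι χ_{int(□_ι)}` associated with a `0/1`-pattern `δ` on the
index set `{0,…,N-1}^n`. -/
noncomputable def udelta (n N : ℕ) (L h : ℝ) (δ : (Fin n → Fin N) → Bool) : Eucl n → ℝ :=
  fun x => ∑ ι : Fin n → Fin N,
    Set.indicator (interior (subcube n N L ι)) (fun _ => if δ ι then h else 0) x

lemma abel_aux (d g : ℕ → ℝ) (C : ℝ) (hd : ∀ j, d j = 0 ∨ d j = 1) (hg : ∀ j, |g j| ≤ C) :
    ∀ K : ℕ, |(∑ j ∈ Finset.range (K+1), d j * (g (j+1) - g j)) - d K * g (K+1) + d 0 * g 0|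
      ≤ (K : ℝ) * C := by
  have hC : 0 ≤ C := le_trans (abs_nonneg _) (hg 0)
  have hdd : ∀ j k, |d j - d k| ≤ 1 := by
    intro j k
    rcases hd j with h1 | h1 <;> rcases hd k with h2 | h2 <;> simp [h1, h2]
  intro K
  induction K with
  | zero =>
    have : (∑ j ∈ Finset.range 1, d j * (g (j+1) - g j)) - d 0 * g 1 + d 0 * g 0 = 0 := by
      rw [Finset.sum_range_one]; ring
    rw [show (0:ℕ) + 1 = 1 from rfl, this]; simp
  | succ K ih =>
    have : (∑ j ∈ Finset.range (K+1+1), d j * (g (j+1) - g j)) - d (K+1) * g (K+2) + d 0 * g 0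
        = ((∑ j ∈ Finset.range (K+1), d j * (g (j+1) - g j)) - d K * g (K+1) + d 0 * g 0)
          + (d K - d (K+1)) * g (K+1) := by
      rw [Finset.sum_range_succ]; ring
    rw [this]
    calc _ ≤ (K:ℝ) * C + |(d K - d (K+1)) * g (K+1)| := by
            exact le_trans (abs_add_le _ _) (by gcongr)
      _ ≤ (K:ℝ) * C + 1 * C := by
            gcongr
            rw [abs_mul]
            exact mul_le_mul (hdd _ _) (hg _) (abs_nonneg _) zero_le_one
      _ = ((K+1 : ℕ) : ℝ) * C := by push_cast; ring

lemma abel_bound (d g : ℕ → ℝ) (C : ℝ) (K : ℕ) (hK : 1 ≤ K) (hd : ∀ j, d j = 0 ∨ d j = 1)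
    (hg : ∀ j, |g j| ≤ C) (h0 : g 0 = 0) (hKz : g K = 0) :
    |∑ j ∈ Finset.range K, d j * (g (j+1) - g j)| ≤ ((K : ℝ) - 1) * C := by
  obtain ⟨K, rfl⟩ : ∃ K', K = K' + 1 := ⟨K - 1, (Nat.succ_pred_eq_of_pos hK).symm⟩
  have := abel_aux d g C hd hg K
  rw [hKz, h0] at this
  simpa using this

noncomputable def faceInt (m N : ℕ) (L : ℝ) (f : (Fin (m+1) → ℝ) → (Fin (m+1) → ℝ))
    (i : Fin (m+1)) (κ : Fin m → Fin N) (k : ℕ) : ℝ :=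
  ∫ x in Icc (fun j => ((κ j : ℕ) : ℝ) * (L/N)) (fun j => (((κ j : ℕ) : ℝ) + 1) * (L/N)),
    f (i.insertNth ((k : ℝ) * (L/N)) x) i

lemma core (m N : ℕ) (hN : 0 < N) (L h : ℝ) (hL : 0 < L) (hh : 0 < h)
    (d : (Fin (m+1) → Fin N) → ℝ) (hd : ∀ ι, d ι = 0 ∨ d ι = 1)
    (f : (Fin (m+1) → ℝ) → (Fin (m+1) → ℝ))
    (f' : (Fin (m+1) → ℝ) → ((Fin (m+1) → ℝ) →L[ℝ] (Fin (m+1) → ℝ)))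
    (hder : ∀ x, HasFDerivAt f (f' x) x)
    (hdiv : Continuous fun x => ∑ i, f' x (Pi.single i 1) i)
    (hf1 : ∀ x i, |f x i| ≤ 1)
    (hsupp : ∀ x : Fin (m+1) → ℝ, x ∉ Set.univ.pi (fun _ : Fin (m+1) => Ioo (0:ℝ) L) → f x = 0) :
    |∑ ι : Fin (m+1) → Fin N, (h * d ι) *
        ∫ x in Icc (fun j => ((ι j : ℕ) : ℝ) * (L/N)) (fun j => (((ι j : ℕ) : ℝ) + 1) * (L/N)),
          ∑ i, f' x (Pi.single i 1) i|
      ≤ h * ((m:ℝ)+1) * ((N:ℝ)-1) * L^m := by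
  have hNR : (0:ℝ) < N := by exact_mod_cast hN
  set c := L / N with hc_def
  have hc : 0 < c := div_pos hL hNR
  have hNc : (N:ℝ) * c = L := by rw [hc_def]; field_simp
  have hcont_f : Continuous f := by
    have : Differentiable ℝ f := fun x => (hder x).differentiableAt
    exact this.continuous
  -- divergence theorem on each subcube
  have key : ∀ ι : Fin (m+1) → Fin N,
      (∫ x in Icc (fun j => ((ι j : ℕ) : ℝ) * c) (fun j => (((ι j : ℕ) : ℝ) + 1) * c),
          ∑ i, f' x (Pi.single i 1) i)
        = ∑ i, (faceInt m N L f i (fun j => ι (i.succAbove j)) ((ι i : ℕ) + 1)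
            - faceInt m N L f i (fun j => ι (i.succAbove j)) (ι i : ℕ)) := by
    intro ι
    have hle : (fun j => ((ι j : ℕ) : ℝ) * c) ≤ fun j => (((ι j : ℕ) : ℝ) + 1) * c := by
      intro j; dsimp; nlinarith [hc]
    rw [MeasureTheory.integral_divergence_of_hasFDerivAt_off_countable
      (fun j => ((ι j : ℕ) : ℝ) * c) (fun j => (((ι j : ℕ) : ℝ) + 1) * c) hle f f' ∅
      countable_empty hcont_f.continuousOn (fun x hx => hder x) hdiv.integrableOn_Icc]
    refine Finset.sum_congr rfl fun i _ => ?_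
    have c1 : (((ι i : ℕ) : ℝ) + 1) * c = (((ι i : ℕ) + 1 : ℕ) : ℝ) * c := by push_cast; ring
    rw [faceInt, faceInt, c1]
    rfl
  -- reindex each directional sum
  have h1 : ∀ i : Fin (m+1),
      (∑ ι : Fin (m+1) → Fin N, d ι * (faceInt m N L f i (fun j => ι (i.succAbove j)) ((ι i : ℕ) + 1)
          - faceInt m N L f i (fun j => ι (i.succAbove j)) (ι i : ℕ)))
        = ∑ κ : Fin m → Fin N, ∑ j : Fin N,
            d (i.insertNth j κ) * (faceInt m N L f i κ ((j : ℕ) + 1) - faceInt m N L f i κ (j : ℕ)) := by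
    intro i
    rw [← Equiv.sum_comp (Fin.insertNthEquiv (fun _ => Fin N) i)
      (fun ι => d ι * (faceInt m N L f i (fun j => ι (i.succAbove j)) ((ι i : ℕ) + 1)
          - faceInt m N L f i (fun j => ι (i.succAbove j)) (ι i : ℕ))), Fintype.sum_prod_type,
      Finset.sum_comm]
    refine Finset.sum_congr rfl fun κ _ => Finset.sum_congr rfl fun j _ => ?_
    have he : (Fin.insertNthEquiv (fun _ => Fin N) i) (j, κ) = i.insertNth j κ := rfl
    simp [he, Fin.insertNth_apply_same, Fin.insertNth_apply_succAbove]
  -- bounds on face integrals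
  have hface : ∀ (i : Fin (m+1)) (κ : Fin m → Fin N) (k : ℕ), |faceInt m N L f i κ k| ≤ c ^ m := by
    intro i κ k
    have hle : (fun j => ((κ j : ℕ) : ℝ) * c) ≤ fun j => (((κ j : ℕ) : ℝ) + 1) * c := by
      intro j; dsimp; nlinarith [hc]
    rw [← Real.norm_eq_abs, faceInt]
    have hb := norm_setIntegral_le_of_norm_le_const (μ := volume)
      (s := Icc (fun j => ((κ j : ℕ) : ℝ) * c) (fun j => (((κ j : ℕ) : ℝ) + 1) * c))
      (f := fun x => f (i.insertNth ((k : ℝ) * c) x) i) (C := 1)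
      measure_Icc_lt_top (fun x _ => by rw [Real.norm_eq_abs]; exact hf1 _ i)
    rw [measureReal_def, Real.volume_Icc_pi_toReal hle] at hb
    calc ‖∫ x in _, f (i.insertNth ((k : ℝ) * c) x) i‖ ≤ 1 * ∏ j : Fin m, ((((κ j : ℕ) : ℝ) + 1) * c - ((κ j : ℕ) : ℝ) * c) := hb
      _ = c ^ m := by
          rw [one_mul]
          rw [Finset.prod_congr rfl (fun j _ => by ring : ∀ j ∈ Finset.univ, ((((κ j : ℕ) : ℝ) + 1) * c - ((κ j : ℕ) : ℝ) * c) = c)]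
          simp [Finset.prod_const]
  have hout : ∀ (i : Fin (m+1)) (κ : Fin m → Fin N) (k : ℕ), ((k:ℝ) * c = 0 ∨ (k:ℝ) * c = L) →
      faceInt m N L f i κ k = 0 := by
    intro i κ k hk
    have hz : ∀ x : Fin m → ℝ, f (i.insertNth ((k : ℝ) * c) x) i = 0 := by
      intro x
      have hni : i.insertNth ((k : ℝ) * c) x ∉ Set.univ.pi (fun _ : Fin (m+1) => Ioo (0:ℝ) L) := by
        intro hmem
        have := hmem i (mem_univ i)
        rw [Fin.insertNth_apply_same] at this
        rcases hk with hk | hk <;> rw [hk] at this <;>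
          simp only [mem_Ioo] at this
        · exact lt_irrefl 0 this.1
        · exact lt_irrefl L this.2
      rw [hsupp _ hni]; rfl
    rw [faceInt]
    simp only [← hc_def, hz, integral_zero]
  -- abel bound per column
  have inner_bound : ∀ (i : Fin (m+1)) (κ : Fin m → Fin N),
      |∑ j : Fin N, d (i.insertNth j κ) * (faceInt m N L f i κ ((j : ℕ) + 1) - faceInt m N L f i κ (j : ℕ))|
        ≤ ((N:ℝ) - 1) * c ^ m := by
    intro i κ
    have habel := abel_bound (fun k => if hk : k < N then d (i.insertNth ⟨k, hk⟩ κ) else 0)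
      (faceInt m N L f i κ) (c ^ m) N hN
      (by intro j; by_cases hj : j < N
          · simpa [hj] using hd _
          · simp [hj])
      (hface i κ)
      (hout i κ 0 (Or.inl (by simp)))
      (hout i κ N (Or.inr hNc))
    rw [← Fin.sum_univ_eq_sum_range
      (fun k => (if hk : k < N then d (i.insertNth ⟨k, hk⟩ κ) else 0) *
        (faceInt m N L f i κ (k + 1) - faceInt m N L f i κ k)) N] at habel
    simpa using habel
  -- put everything together
  have hS : (∑ ι : Fin (m+1) → Fin N, (h * d ι) *
        ∫ x in Icc (fun j => ((ι j : ℕ) : ℝ) * c) (fun j => (((ι j : ℕ) : ℝ) + 1) * c),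
          ∑ i, f' x (Pi.single i 1) i)
      = h * ∑ i : Fin (m+1), ∑ κ : Fin m → Fin N, ∑ j : Fin N,
          d (i.insertNth j κ) * (faceInt m N L f i κ ((j : ℕ) + 1) - faceInt m N L f i κ (j : ℕ)) := by
    calc (∑ ι : Fin (m+1) → Fin N, (h * d ι) *
        ∫ x in Icc (fun j => ((ι j : ℕ) : ℝ) * c) (fun j => (((ι j : ℕ) : ℝ) + 1) * c),
          ∑ i, f' x (Pi.single i 1) i)
        = ∑ ι : Fin (m+1) → Fin N, ∑ i : Fin (m+1),
            h * (d ι * (faceInt m N L f i (fun j => ι (i.succAbove j)) ((ι i : ℕ) + 1)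
              - faceInt m N L f i (fun j => ι (i.succAbove j)) (ι i : ℕ))) := by
          refine Finset.sum_congr rfl fun ι _ => ?_
          rw [key ι, Finset.mul_sum]
          exact Finset.sum_congr rfl fun i _ => by ring
      _ = ∑ i : Fin (m+1), ∑ ι : Fin (m+1) → Fin N,
            h * (d ι * (faceInt m N L f i (fun j => ι (i.succAbove j)) ((ι i : ℕ) + 1)
              - faceInt m N L f i (fun j => ι (i.succAbove j)) (ι i : ℕ))) := Finset.sum_comm
      _ = h * ∑ i : Fin (m+1), ∑ κ : Fin m → Fin N, ∑ j : Fin N,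
            d (i.insertNth j κ) * (faceInt m N L f i κ ((j : ℕ) + 1) - faceInt m N L f i κ (j : ℕ)) := by
          rw [Finset.mul_sum]
          refine Finset.sum_congr rfl fun i _ => ?_
          rw [← h1 i, Finset.mul_sum]
  rw [hS, abs_mul, abs_of_pos hh]
  have : |∑ i : Fin (m+1), ∑ κ : Fin m → Fin N, ∑ j : Fin N,
      d (i.insertNth j κ) * (faceInt m N L f i κ ((j : ℕ) + 1) - faceInt m N L f i κ (j : ℕ))|
      ≤ ((m:ℝ)+1) * ((N:ℝ)-1) * L^m := by
    calc _ ≤ ∑ i : Fin (m+1), |∑ κ : Fin m → Fin N, ∑ j : Fin N,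
        d (i.insertNth j κ) * (faceInt m N L f i κ ((j : ℕ) + 1) - faceInt m N L f i κ (j : ℕ))| :=
          Finset.abs_sum_le_sum_abs _ _
      _ ≤ ∑ i : Fin (m+1), ∑ κ : Fin m → Fin N, |∑ j : Fin N,
        d (i.insertNth j κ) * (faceInt m N L f i κ ((j : ℕ) + 1) - faceInt m N L f i κ (j : ℕ))| :=
          Finset.sum_le_sum fun i _ => Finset.abs_sum_le_sum_abs _ _
      _ ≤ ∑ _i : Fin (m+1), ∑ _κ : Fin m → Fin N, ((N:ℝ) - 1) * c ^ m :=
          Finset.sum_le_sum fun i _ => Finset.sum_le_sum fun κ _ => inner_bound i κ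
      _ = ((m:ℝ)+1) * ((N:ℝ)^m * (((N:ℝ) - 1) * c ^ m)) := by
          simp only [Finset.sum_const, Finset.card_univ, Fintype.card_fun, Fintype.card_fin,
            nsmul_eq_mul]
          push_cast
          ring
      _ = ((m:ℝ)+1) * ((N:ℝ)-1) * L^m := by
          rw [← hNc, mul_pow]; ring
  calc h * |_| ≤ h * (((m:ℝ)+1) * ((N:ℝ)-1) * L^m) := by gcongr
    _ = h * ((m:ℝ)+1) * ((N:ℝ)-1) * L^m := by ring

lemma eucl_abs_le_norm {n : ℕ} (w : Eucl n) (i : Fin n) : |w i| ≤ ‖w‖ := by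
  rw [EuclideanSpace.norm_eq]
  have h1 : |w i| = Real.sqrt (|w i| ^ 2) := (Real.sqrt_sq (abs_nonneg _)).symm
  rw [h1]
  apply Real.sqrt_le_sqrt
  rw [sq_abs]
  have := Finset.single_le_sum (f := fun j => ‖w j‖ ^ 2) (fun j _ => sq_nonneg _)
    (Finset.mem_univ i)
  simpa [Real.norm_eq_abs, sq_abs] using this

lemma subcube_eq (n N : ℕ) (L : ℝ) (ι : Fin n → Fin N) :
    subcube n N L ι = (EuclideanSpace.equiv (Fin n) ℝ) ⁻¹'
      (Set.univ.pi fun i => Icc (((ι i : ℕ) : ℝ) * (L / N)) ((((ι i : ℕ) : ℝ) + 1) * (L / N))) := by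
  ext x
  simp only [subcube, Set.mem_setOf_eq, Set.mem_preimage, Set.mem_pi, Set.mem_univ,
    forall_true_left]
  rfl

lemma mem_interior_subcube {n N : ℕ} {L : ℝ} {ι : Fin n → Fin N} {x : Eucl n} :
    x ∈ interior (subcube n N L ι) ↔
      ∀ i, x i ∈ Ioo (((ι i : ℕ) : ℝ) * (L / N)) ((((ι i : ℕ) : ℝ) + 1) * (L / N)) := by
  rw [subcube_eq]
  rw [show (⇑(EuclideanSpace.equiv (Fin n) ℝ) ⁻¹'
      (Set.univ.pi fun i => Icc (((ι i : ℕ) : ℝ) * (L / N)) ((((ι i : ℕ) : ℝ) + 1) * (L / N))))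
    = (EuclideanSpace.equiv (Fin n) ℝ).toHomeomorph ⁻¹'
      (Set.univ.pi fun i => Icc (((ι i : ℕ) : ℝ) * (L / N)) ((((ι i : ℕ) : ℝ) + 1) * (L / N)))
    from rfl, ← Homeomorph.preimage_interior, interior_pi_set Set.finite_univ]
  simp only [Set.mem_preimage, Set.mem_pi, Set.mem_univ, forall_true_left, Function.comp,
    interior_Icc]
  rfl

lemma interior_subcube_disjoint {n N : ℕ} {L : ℝ} (hL : 0 < L) (hN : 0 < N)
    {ι κ : Fin n → Fin N} (hik : ι ≠ κ) {x : Eucl n}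
    (hx : x ∈ interior (subcube n N L ι)) : x ∉ interior (subcube n N L κ) := by
  intro hx'
  rw [mem_interior_subcube] at hx hx'
  obtain ⟨i, hi⟩ := Function.ne_iff.1 hik
  have hNR : (0:ℝ) < N := by exact_mod_cast hN
  have hc : 0 < L / N := div_pos hL hNR
  have h1 := hx i
  have h2 := hx' i
  simp only [Set.mem_Ioo] at h1 h2
  rcases lt_or_gt_of_ne (fun hv => hi (Fin.val_injective hv) : (ι i : ℕ) ≠ (κ i : ℕ)) with hlt | hlt
  · have : ((ι i : ℕ) : ℝ) + 1 ≤ ((κ i : ℕ) : ℝ) := by exact_mod_cast Nat.succ_le_of_lt hlt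
    nlinarith [h1.2, h2.1]
  · have : ((κ i : ℕ) : ℝ) + 1 ≤ ((ι i : ℕ) : ℝ) := by exact_mod_cast Nat.succ_le_of_lt hlt
    nlinarith [h1.1, h2.2]

lemma udelta_nonneg {n N : ℕ} {L h : ℝ} (hh : 0 ≤ h) (δ : (Fin n → Fin N) → Bool) (x : Eucl n) :
    0 ≤ udelta n N L h δ x := by
  refine Finset.sum_nonneg fun ι _ => Set.indicator_nonneg (fun y _ => ?_) x
  split <;> simp [hh]

lemma udelta_le {n N : ℕ} {L h : ℝ} (hL : 0 < L) (hN : 0 < N) (hh : 0 ≤ h)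
    (δ : (Fin n → Fin N) → Bool) (x : Eucl n) : udelta n N L h δ x ≤ h := by
  by_cases hex : ∃ ι, x ∈ interior (subcube n N L ι)
  · obtain ⟨ι₀, hι₀⟩ := hex
    rw [udelta, Finset.sum_eq_single ι₀]
    · rw [Set.indicator_of_mem hι₀]; split <;> simp [hh]
    · intro ι _ hne
      exact Set.indicator_of_notMem
        (fun hmem => interior_subcube_disjoint hL hN hne hmem hι₀) _
    · intro habs; exact absurd (Finset.mem_univ ι₀) habs
  · rw [udelta, Finset.sum_eq_zero]
    · exact hh
    · intro ι _
      exact Set.indicator_of_notMem (fun hmem => hex ⟨ι, hmem⟩) _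

lemma subcube_compact {n N : ℕ} (L : ℝ) (ι : Fin n → Fin N) : IsCompact (subcube n N L ι) := by
  rw [subcube_eq]
  rw [show (⇑(EuclideanSpace.equiv (Fin n) ℝ) ⁻¹' _)
    = (EuclideanSpace.equiv (Fin n) ℝ).toHomeomorph ⁻¹' _ from rfl]
  rw [Homeomorph.isCompact_preimage]
  rw [Set.pi_univ_Icc]
  exact isCompact_Icc

lemma udelta_integrable {n N : ℕ} (L h : ℝ) (δ : (Fin n → Fin N) → Bool) :
    MeasureTheory.Integrable (udelta n N L h δ) := by
  apply MeasureTheory.integrable_finset_sum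
  intro ι _
  refine (MeasureTheory.integrable_indicator_iff isOpen_interior.measurableSet).2 ?_
  refine MeasureTheory.integrableOn_const (ne_of_lt ?_)
  exact lt_of_le_of_lt (MeasureTheory.measure_mono interior_subset)
    (subcube_compact L ι).measure_lt_top

lemma testIntegral_bound (m N : ℕ) (hN : 0 < N) (L h : ℝ) (hL : 0 < L) (hh : 0 < h)
    (δ : (Fin (m+1) → Fin N) → Bool) (φ : Eucl (m+1) → Eucl (m+1))
    (hφ : ContDiff ℝ 1 φ) (hsp : tsupport φ ⊆ opencube (m+1) L) (hφ1 : ∀ x, ‖φ x‖ ≤ 1) :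
    |∫ x in opencube (m+1) L, udelta (m+1) N L h δ x * divg φ x|
      ≤ h * ((m:ℝ)+1) * ((N:ℝ)-1) * L^m := by
  have hNR : (0:ℝ) < N := by exact_mod_cast hN
  have hc : 0 < L / N := div_pos hL hNR
  set ec := EuclideanSpace.equiv (Fin (m+1)) ℝ with hec
  set ev := (MeasurableEquiv.toLp 2 (Fin (m+1) → ℝ)).symm with hev
  set d : (Fin (m+1) → Fin N) → ℝ := fun ι => if δ ι then 1 else 0 with hd_def
  have hd : ∀ ι, d ι = 0 ∨ d ι = 1 := by
    intro ι; by_cases hδ : δ ι <;> simp [hd_def, hδ]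
  set f : (Fin (m+1) → ℝ) → (Fin (m+1) → ℝ) := fun y => ec (φ (ec.symm y)) with hf_def
  set f' : (Fin (m+1) → ℝ) → ((Fin (m+1) → ℝ) →L[ℝ] (Fin (m+1) → ℝ)) :=
    fun y => ((ec : Eucl (m+1) →L[ℝ] (Fin (m+1) → ℝ)).comp
      ((fderiv ℝ φ (ec.symm y)).comp
        ((ec.symm : (Fin (m+1) → ℝ) →L[ℝ] Eucl (m+1))))) with hf'_def
  have hder : ∀ y, HasFDerivAt f (f' y) y := by
    intro y
    have h1 : HasFDerivAt φ (fderiv ℝ φ (ec.symm y)) (ec.symm y) :=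
      ((hφ.differentiable one_ne_zero) (ec.symm y)).hasFDerivAt
    exact (ec.hasFDerivAt.comp y (h1.comp y ec.symm.hasFDerivAt))
  have hdivg : ∀ y, (∑ i, f' y (Pi.single i 1) i) = divg φ (ec.symm y) := fun y => rfl
  have hdiv : Continuous fun y => ∑ i, f' y (Pi.single i 1) i := by
    simp only [hdivg]
    unfold divg
    refine continuous_finset_sum _ fun i _ => ?_
    have hfd : Continuous (fderiv ℝ φ) := hφ.continuous_fderiv one_ne_zero
    have h2 : Continuous fun y => (fderiv ℝ φ (ec.symm y)) (EuclideanSpace.single i 1) :=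
      (hfd.comp ec.symm.continuous).clm_apply continuous_const
    exact (EuclideanSpace.proj (𝕜 := ℝ) i).continuous.comp h2
  have hf1p : ∀ y i, |f y i| ≤ 1 := fun y i =>
    le_trans (eucl_abs_le_norm (φ (ec.symm y)) i) (hφ1 _)
  have hsuppp : ∀ y : Fin (m+1) → ℝ,
      y ∉ Set.univ.pi (fun _ : Fin (m+1) => Ioo (0:ℝ) L) → f y = 0 := by
    intro y hy
    have h0 : ec.symm y ∉ opencube (m+1) L := by
      intro hc'; exact hy (fun i _ => hc' i)
    have hz : φ (ec.symm y) = 0 :=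
      image_eq_zero_of_notMem_tsupport (fun hmem => h0 (hsp hmem))
    simp only [hf_def, hz, map_zero]
  have hcore := core m N hN L h hL hh d hd f f' hder hdiv hf1p hsuppp
  -- now show the integral equals the sum in hcore
  have himg : opencube (m+1) L = ⇑ev.symm '' (Set.univ.pi fun _ : Fin (m+1) => Ioo (0:ℝ) L) := by
    ext x
    simp only [Set.mem_image]
    constructor
    · intro hx
      exact ⟨ev x, fun i _ => hx i, ev.symm_apply_apply x⟩
    · rintro ⟨y, hy, rfl⟩
      intro i
      exact hy i (Set.mem_univ i)
  have hmeas : ∀ ι : Fin (m+1) → Fin N, MeasurableSet (Set.univ.pi fun i =>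
      Ioo (((ι i : ℕ) : ℝ) * (L/N)) ((((ι i : ℕ) : ℝ) + 1) * (L/N))) :=
    fun ι => MeasurableSet.univ_pi fun i => measurableSet_Ioo
  have hsubIcc : ∀ ι : Fin (m+1) → Fin N,
      (Set.univ.pi fun i => Ioo (((ι i : ℕ) : ℝ) * (L/N)) ((((ι i : ℕ) : ℝ) + 1) * (L/N)))
        ⊆ Icc (fun j => ((ι j : ℕ) : ℝ) * (L/N)) (fun j => (((ι j : ℕ) : ℝ) + 1) * (L/N)) := by
    intro ι y hy
    rw [← Set.pi_univ_Icc]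
    exact fun i _ => Ioo_subset_Icc_self (hy i (Set.mem_univ i))
  have hsubpio : ∀ ι : Fin (m+1) → Fin N,
      (Set.univ.pi fun i => Ioo (((ι i : ℕ) : ℝ) * (L/N)) ((((ι i : ℕ) : ℝ) + 1) * (L/N)))
        ⊆ Set.univ.pi (fun _ : Fin (m+1) => Ioo (0:ℝ) L) := by
    intro ι y hy i _
    have h1 := hy i (Set.mem_univ i)
    simp only [Set.mem_Ioo] at h1 ⊢
    have hlt : ((ι i : ℕ) : ℝ) + 1 ≤ (N : ℝ) := by exact_mod_cast (ι i).isLt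
    constructor
    · nlinarith [h1.1, hc, (Nat.cast_nonneg (ι i : ℕ) : (0:ℝ) ≤ (ι i : ℕ))]
    · have : (((ι i : ℕ) : ℝ) + 1) * (L/N) ≤ (N:ℝ) * (L/N) := by nlinarith [hc]
      have hNc : (N:ℝ) * (L/N) = L := by field_simp
      nlinarith [h1.2]
  have haeeq : ∀ ι : Fin (m+1) → Fin N,
      (Set.univ.pi fun i => Ioo (((ι i : ℕ) : ℝ) * (L/N)) ((((ι i : ℕ) : ℝ) + 1) * (L/N)))
        =ᵐ[volume] Icc (fun j => ((ι j : ℕ) : ℝ) * (L/N)) (fun j => (((ι j : ℕ) : ℝ) + 1) * (L/N)) := by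
    intro ι
    refine MeasureTheory.ae_eq_of_subset_of_measure_ge (hsubIcc ι) (le_of_eq ?_)
      (hmeas ι).nullMeasurableSet measure_Icc_lt_top.ne
    rw [Real.volume_Icc_pi, Real.volume_pi_Ioo]
  have hv : (∫ x in opencube (m+1) L, udelta (m+1) N L h δ x * divg φ x)
      = ∑ ι : Fin (m+1) → Fin N, (h * d ι) *
          ∫ x in Icc (fun j => ((ι j : ℕ) : ℝ) * (L/N)) (fun j => (((ι j : ℕ) : ℝ) + 1) * (L/N)),
            ∑ i, f' x (Pi.single i 1) i := by
    rw [himg, MeasurePreserving.setIntegral_image_emb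
      (MeasurePreserving.symm _ (EuclideanSpace.volume_preserving_symm_measurableEquiv_toLp (Fin (m+1))))
      ev.symm.measurableEmbedding]
    have hintg : ∀ y : Fin (m+1) → ℝ,
        udelta (m+1) N L h δ (ev.symm y) * divg φ (ev.symm y)
          = ∑ ι : Fin (m+1) → Fin N,
              Set.indicator (Set.univ.pi fun i =>
                  Ioo (((ι i : ℕ) : ℝ) * (L/N)) ((((ι i : ℕ) : ℝ) + 1) * (L/N)))
                (fun y' => (h * d ι) * ∑ i, f' y' (Pi.single i 1) i) y := by
      intro y
      have hu : udelta (m+1) N L h δ (ev.symm y)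
          = ∑ ι : Fin (m+1) → Fin N,
              Set.indicator (Set.univ.pi fun i =>
                  Ioo (((ι i : ℕ) : ℝ) * (L/N)) ((((ι i : ℕ) : ℝ) + 1) * (L/N)))
                (fun _ => h * d ι) y := by
        rw [udelta]
        refine Finset.sum_congr rfl fun ι _ => ?_
        have hmemiff : ev.symm y ∈ interior (subcube (m+1) N L ι) ↔
            y ∈ (Set.univ.pi fun i =>
              Ioo (((ι i : ℕ) : ℝ) * (L/N)) ((((ι i : ℕ) : ℝ) + 1) * (L/N))) := by
          rw [mem_interior_subcube]
          constructor
          · intro hmem i _; exact hmem i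
          · intro hmem i; exact hmem i (Set.mem_univ i)
        by_cases hy : y ∈ (Set.univ.pi fun i =>
            Ioo (((ι i : ℕ) : ℝ) * (L/N)) ((((ι i : ℕ) : ℝ) + 1) * (L/N)))
        · rw [Set.indicator_of_mem (hmemiff.2 hy), Set.indicator_of_mem hy]
          by_cases hδ : δ ι <;> simp [hd_def, hδ]
        · rw [Set.indicator_of_notMem (fun hmem => hy (hmemiff.1 hmem)),
            Set.indicator_of_notMem hy]
      rw [hu, Finset.sum_mul]
      refine Finset.sum_congr rfl fun ι _ => ?_
      have hdg : divg φ (ev.symm y) = ∑ i, f' y (Pi.single i 1) i := (hdivg y).symm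
      by_cases hy : y ∈ (Set.univ.pi fun i =>
          Ioo (((ι i : ℕ) : ℝ) * (L/N)) ((((ι i : ℕ) : ℝ) + 1) * (L/N)))
      · rw [Set.indicator_of_mem hy, Set.indicator_of_mem hy, hdg]
      · rw [Set.indicator_of_notMem hy, Set.indicator_of_notMem hy, zero_mul]
    refine (integral_congr_ae (Filter.Eventually.of_forall hintg)).trans ?_
    rw [MeasureTheory.integral_finset_sum]
    · refine Finset.sum_congr rfl fun ι _ => ?_
      rw [MeasureTheory.setIntegral_indicator (hmeas ι),
        Set.inter_eq_self_of_subset_right (hsubpio ι),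
        MeasureTheory.setIntegral_congr_set (haeeq ι),
        MeasureTheory.integral_const_mul]
    · intro ι _
      refine MeasureTheory.Integrable.restrict ?_
      refine (MeasureTheory.integrable_indicator_iff (hmeas ι)).2 ?_
      exact ((hdiv.integrableOn_Icc).mono_set (hsubIcc ι)).const_mul _
  rw [hv]
  exact hcore


/-- Each `u_δ` is of bounded variation on `(0,L)^n` with
`|Du_δ|((0,L)^n) ≤ (2L)^{n-1} N h`; in particular, if
`0 < h ≤ min{M, V/(2^{n-1} L^{n-1} N)}` then `u_δ ∈ F_{[L,M,V]}`. -/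
theorem udelta_BV (n N : ℕ) (hn : 1 ≤ n) (hN : 0 < N) (L M V h : ℝ)
    (hL : 0 < L) (hM : 0 < M) (hV : 0 < V) (hh : 0 < h)
    (δ : (Fin n → Fin N) → Bool) :
    (IntegrableOn (udelta n N L h δ) (opencube n L) ∧
      ∀ v ∈ testIntegrals (udelta n N L h δ) (opencube n L), v ≤ (2 * L) ^ (n - 1) * N * h) ∧
    (h ≤ min M (V / (2 ^ (n - 1) * L ^ (n - 1) * N)) → udelta n N L h δ ∈ Fclass n L M V) := by
  obtain ⟨m, rfl⟩ : ∃ m, n = m + 1 := ⟨n - 1, (Nat.succ_pred_eq_of_pos hn).symm⟩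
  simp only [Nat.add_sub_cancel]
  have hNR : (0:ℝ) < N := by exact_mod_cast hN
  have hN1 : (1:ℝ) ≤ N := by exact_mod_cast hN
  have hint : Integrable (udelta (m+1) N L h δ) := udelta_integrable L h δ
  have hm2 : ((m:ℝ)+1) ≤ 2^m := by
    have := Nat.lt_two_pow_self (n := m)
    exact_mod_cast Nat.succ_le_of_lt this
  have hLm : (0:ℝ) ≤ L^m := by positivity
  have hbound : ∀ v ∈ testIntegrals (udelta (m+1) N L h δ) (opencube (m+1) L),
      v ≤ (2*L)^m * N * h := by
    rintro v ⟨φ, hφ, hφc, hsp, hφ1, rfl⟩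
    have hb := testIntegral_bound m N hN L h hL hh δ φ hφ hsp hφ1
    refine le_trans (le_abs_self _) (hb.trans ?_)
    calc h * ((m:ℝ)+1) * ((N:ℝ)-1) * L^m
        = (((m:ℝ)+1) * ((N:ℝ)-1)) * (h * L^m) := by ring
      _ ≤ ((2:ℝ)^m * N) * (h * L^m) := by
          have h1 : ((m:ℝ)+1) * ((N:ℝ)-1) ≤ (2:ℝ)^m * N := by
            have h2 : (0:ℝ) ≤ (N:ℝ) - 1 := by linarith
            have h3 : ((m:ℝ)+1) * ((N:ℝ)-1) ≤ (2:ℝ)^m * ((N:ℝ)-1) :=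
              mul_le_mul_of_nonneg_right hm2 h2
            have h4 : (2:ℝ)^m * ((N:ℝ)-1) ≤ (2:ℝ)^m * N := by
              have : (0:ℝ) ≤ (2:ℝ)^m := by positivity
              nlinarith
            linarith
          have h5 : (0:ℝ) ≤ h * L^m := mul_nonneg hh.le hLm
          exact mul_le_mul_of_nonneg_right h1 h5
      _ = (2*L)^m * N * h := by rw [mul_pow]; ring
  refine ⟨⟨hint.integrableOn, hbound⟩, ?_⟩
  intro hhm
  obtain ⟨hhM, hhV⟩ := le_min_iff.1 hhm
  refine ⟨hint.integrableOn, ?_, ?_⟩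
  · refine Filter.Eventually.of_forall fun x => ?_
    have h1 := udelta_nonneg (n := m+1) (L := L) hh.le δ x
    have h2 := udelta_le hL hN hh.le δ x
    rw [abs_of_nonneg h1]
    exact h2.trans hhM
  · intro v hv
    refine (hbound v hv).trans ?_
    have hD : (0:ℝ) < 2^m * L^m * N := by positivity
    calc (2*L)^m * (N:ℝ) * h = h * (2^m * L^m * N) := by rw [mul_pow]; ring
      _ ≤ V := by
          have := (le_div_iff₀ hD).1 hhV
          linarith
end

section
/- Let n ≥ 1, L, M, V > 0, N ∈ ℕ, and h > 0 with 0 < h ≤ min{M, V/(2^{n−1}·L^{n−1}·N)}. Let G_{h,N} = {u_δ : δ ∈ {0,1}^{({0,…,N−1}^n)}} where u_δ(x) = Σ_ι h·δ_ι·χ_{int(□_ι)}(x). Then for every 0 < ε ≤ h·L^n/8, the covering number satisfies N_ε(G_{h,N} | L¹([0,L]^n)) ≥ e^{N^n/8}. -/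
open MeasureTheory Set

-- ======== auxiliary lemmas ========
section Aux
open Finset

/-- The open subcube (interior box). -/
def opbox (n N : ℕ) (L : ℝ) (ι : Fin n → Fin N) : Set (Eucl n) :=
  {x | ∀ i, x i ∈ Ioo (((ι i : ℕ) : ℝ) * (L / N)) ((((ι i : ℕ) : ℝ) + 1) * (L / N))}

noncomputable def eeAux (n : ℕ) : Eucl n ≃ₜ (Fin n → ℝ) :=
  (PiLp.continuousLinearEquiv 2 ℝ fun _ : Fin n => ℝ).toHomeomorph

lemma preim_pi_aux (n : ℕ) (s : Fin n → Set ℝ) :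
    (eeAux n) ⁻¹' (univ.pi s) = {x : Eucl n | ∀ i, x i ∈ s i} := by
  ext x; simp [eeAux, Set.mem_univ_pi]

lemma interior_subcube (n N : ℕ) (L : ℝ) (ι : Fin n → Fin N) :
    interior (subcube n N L ι) = opbox n N L ι := by
  have h1 : subcube n N L ι = (eeAux n) ⁻¹' (univ.pi fun i =>
      Icc (((ι i : ℕ) : ℝ) * (L / N)) ((((ι i : ℕ) : ℝ) + 1) * (L / N))) := by
    rw [preim_pi_aux]; rfl
  rw [h1, ← Homeomorph.preimage_interior, interior_pi_set finite_univ]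
  simp only [interior_Icc]
  rw [preim_pi_aux]; rfl

lemma meas_preim_pi_aux (n : ℕ) (s : Fin n → Set ℝ) (hs : ∀ i, MeasurableSet (s i)) :
    volume {x : Eucl n | ∀ i, x i ∈ s i} = ∏ i, volume (s i) := by
  have h1 : {x : Eucl n | ∀ i, x i ∈ s i} =
      ((MeasurableEquiv.toLp 2 (Fin n → ℝ)).symm) ⁻¹' (univ.pi s) := by
    ext x; simp [Set.mem_univ_pi]
  rw [h1, (EuclideanSpace.volume_preserving_symm_measurableEquiv_toLp (Fin n)).measure_preimage
      ((MeasurableSet.univ_pi (fun i => hs i)).nullMeasurableSet), volume_pi_pi]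

lemma volume_opbox (n N : ℕ) (hN : 0 < N) (L : ℝ) (hL : 0 < L) (ι : Fin n → Fin N) :
    volume (opbox n N L ι) = ENNReal.ofReal ((L / N) ^ n) := by
  have : opbox n N L ι = {x : Eucl n | ∀ i, x i ∈
      Ioo (((ι i : ℕ) : ℝ) * (L / N)) ((((ι i : ℕ) : ℝ) + 1) * (L / N))} := rfl
  rw [this, meas_preim_pi_aux _ _ (fun i => measurableSet_Ioo)]
  have hc : (0:ℝ) ≤ L / N := by positivity
  simp only [Real.volume_Ioo]
  have : ∀ i : Fin n, ENNReal.ofReal ((((ι i : ℕ) : ℝ) + 1) * (L / N) -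
      ((ι i : ℕ) : ℝ) * (L / N)) = ENNReal.ofReal (L / N) := by
    intro i; ring_nf
  rw [Finset.prod_congr rfl (fun i _ => this i), Finset.prod_const, Finset.card_univ,
    Fintype.card_fin, ← ENNReal.ofReal_pow hc]

lemma opbox_subset_cube (n N : ℕ) (hN : 0 < N) (L : ℝ) (hL : 0 < L) (ι : Fin n → Fin N) :
    opbox n N L ι ⊆ cube n L := by
  intro x hx i
  have h := hx i
  have hc : (0:ℝ) < L / N := by positivity
  have h1 : (0:ℝ) ≤ ((ι i : ℕ) : ℝ) * (L / N) := by positivity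
  have h2 : (((ι i : ℕ) : ℝ) + 1) * (L / N) ≤ L := by
    have hle : ((ι i : ℕ) : ℝ) + 1 ≤ N := by
      exact_mod_cast Nat.succ_le_of_lt (ι i).isLt
    calc (((ι i : ℕ) : ℝ) + 1) * (L / N) ≤ (N:ℝ) * (L / N) :=
          mul_le_mul_of_nonneg_right hle hc.le
      _ = L := by field_simp
  exact ⟨le_trans h1 h.1.le, le_trans h.2.le h2⟩

lemma opbox_disjoint (n N : ℕ) (L : ℝ) (hL : 0 < L) (hN : 0 < N) {ι ι' : Fin n → Fin N}
    (hne : ι ≠ ι') : Disjoint (opbox n N L ι) (opbox n N L ι') := by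
  rw [Set.disjoint_left]
  intro x hx hx'
  obtain ⟨i, hi⟩ := Function.ne_iff.mp hne
  have h := hx i; have h' := hx' i
  have hc : (0:ℝ) < L / N := by positivity
  have key : ∀ k k' : ℕ, k < k' → ∀ y : ℝ, y ∈ Ioo ((k:ℝ)*(L/N)) (((k:ℝ)+1)*(L/N)) →
      y ∈ Ioo ((k':ℝ)*(L/N)) (((k':ℝ)+1)*(L/N)) → False := by
    intro k k' hkk y hy hy'
    have h1 : ((k:ℝ)+1) ≤ (k':ℝ) := by exact_mod_cast hkk
    have h2 : ((k:ℝ)+1) * (L/N) ≤ (k':ℝ) * (L/N) := mul_le_mul_of_nonneg_right h1 hc.le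
    have := hy.2; have := hy'.1; linarith
  have hki : (ι i : ℕ) ≠ (ι' i : ℕ) := fun hc => hi (Fin.ext hc)
  rcases lt_or_gt_of_ne hki with hlt | hlt
  · exact key _ _ hlt _ h h'
  · exact key _ _ hlt _ h' h

lemma measurableSet_opbox (n N : ℕ) (L : ℝ) (ι : Fin n → Fin N) :
    MeasurableSet (opbox n N L ι) := by
  rw [← interior_subcube]; exact isOpen_interior.measurableSet

lemma abs_sum_indicator_aux {α I : Type*} [Fintype I] (s : I → Set α)
    (hdisj : Pairwise (Function.onFun Disjoint s)) (c : I → ℝ) (x : α) :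
    |∑ i, (s i).indicator (fun _ => c i) x| = ∑ i, (s i).indicator (fun _ => |c i|) x := by
  by_cases hx : ∃ i, x ∈ s i
  · obtain ⟨i0, hi0⟩ := hx
    have hz : ∀ j ∈ Finset.univ, j ≠ i0 → x ∉ s j := by
      intro j _ hj
      exact fun hxj => (hdisj hj).le_bot ⟨hxj, hi0⟩
    rw [Finset.sum_eq_single i0
        (fun j _ hj => Set.indicator_of_notMem (hz j (Finset.mem_univ j) hj) _)
        (fun hj => absurd (Finset.mem_univ i0) hj),
      Finset.sum_eq_single i0
        (fun j _ hj => Set.indicator_of_notMem (hz j (Finset.mem_univ j) hj) _)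
        (fun hj => absurd (Finset.mem_univ i0) hj),
      Set.indicator_of_mem hi0, Set.indicator_of_mem hi0]
  · push_neg at hx
    simp [Set.indicator_of_notMem (hx _)]

lemma dL1_udelta (n N : ℕ) (hN : 0 < N) (L h : ℝ) (hL : 0 < L) (hh : 0 < h)
    (δ δ' : (Fin n → Fin N) → Bool) :
    dL1 n L (udelta n N L h δ) (udelta n N L h δ') =
      h * (L/N)^n * ((Finset.univ.filter (fun ι => δ ι ≠ δ' ι)).card : ℝ) := by
  have hc : (0:ℝ) < L / N := by positivity
  set c : (Fin n → Fin N) → ℝ := fun ι => (if δ ι then h else 0) - (if δ' ι then h else 0)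
    with hcdef
  have hptw : ∀ x : Eucl n, |udelta n N L h δ x - udelta n N L h δ' x| =
      ∑ ι : Fin n → Fin N, (opbox n N L ι).indicator (fun _ => |c ι|) x := by
    intro x
    have : udelta n N L h δ x - udelta n N L h δ' x =
        ∑ ι : Fin n → Fin N, (opbox n N L ι).indicator (fun _ => c ι) x := by
      simp only [udelta, interior_subcube, ← Finset.sum_sub_distrib]
      congr 1; ext ι
      by_cases hx : x ∈ opbox n N L ι <;>
        simp [Set.indicator_of_mem, Set.indicator_of_notMem, hx, hcdef]
    rw [this, abs_sum_indicator_aux _ (fun ι ι' hne => opbox_disjoint n N L hL hN hne)]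
  have habs : ∀ ι, |c ι| = if δ ι ≠ δ' ι then h else 0 := by
    intro ι
    rcases Bool.eq_false_or_eq_true (δ ι) with h1 | h1 <;>
      rcases Bool.eq_false_or_eq_true (δ' ι) with h2 | h2 <;>
      simp [hcdef, h1, h2, abs_of_pos hh]
  have hInt : ∀ ι : Fin n → Fin N, Integrable
      (fun x => (opbox n N L ι).indicator (fun _ => |c ι|) x) (volume.restrict (cube n L)) := by
    intro ι
    rw [integrable_indicator_iff (measurableSet_opbox n N L ι)]
    refine (integrableOn_const_iff (C := |c ι|)).mpr (Or.inr ?_)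
    calc (volume.restrict (cube n L)) (opbox n N L ι) ≤ volume (opbox n N L ι) :=
          Measure.restrict_le_self _
      _ = ENNReal.ofReal ((L/N)^n) := volume_opbox n N hN L hL ι
      _ < ⊤ := ENNReal.ofReal_lt_top
  have hvol : ∀ ι : Fin n → Fin N,
      ((volume.restrict (cube n L)) (opbox n N L ι)).toReal = (L/N)^n := by
    intro ι
    rw [Measure.restrict_apply (measurableSet_opbox n N L ι),
      Set.inter_eq_left.mpr (opbox_subset_cube n N hN L hL ι),
      volume_opbox n N hN L hL ι, ENNReal.toReal_ofReal (by positivity)]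
  calc dL1 n L (udelta n N L h δ) (udelta n N L h δ')
      = ∫ x in cube n L, ∑ ι : Fin n → Fin N, (opbox n N L ι).indicator (fun _ => |c ι|) x := by
        unfold dL1; exact integral_congr_ae (Filter.Eventually.of_forall (fun x => hptw x))
    _ = ∑ ι : Fin n → Fin N, ∫ x in cube n L, (opbox n N L ι).indicator (fun _ => |c ι|) x :=
        integral_finset_sum _ (fun ι _ => hInt ι)
    _ = ∑ ι : Fin n → Fin N, ((volume.restrict (cube n L)) (opbox n N L ι)).toReal • |c ι| :=
        Finset.sum_congr rfl (fun ι _ => integral_indicator_const _ (measurableSet_opbox n N L ι))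
    _ = ∑ ι : Fin n → Fin N, (L/N)^n * (if δ ι ≠ δ' ι then h else 0) := by
        refine Finset.sum_congr rfl (fun ι _ => ?_)
        rw [hvol ι, habs ι, smul_eq_mul]
    _ = h * (L/N)^n * ((Finset.univ.filter (fun ι => δ ι ≠ δ' ι)).card : ℝ) := by
        rw [← Finset.mul_sum, Finset.sum_ite, Finset.sum_const, Finset.sum_const]
        simp only [smul_eq_mul, mul_zero, add_zero, nsmul_eq_mul]
        ring

lemma ball_card_le {I : Type*} [Fintype I] [DecidableEq I] (δ0 : I → Bool) :
    ((Finset.univ.filter (fun δ : I → Bool =>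
        ((Finset.univ.filter (fun ι => δ0 ι ≠ δ ι)).card : ℝ) ≤ (Fintype.card I : ℝ)/4)).card : ℝ)
      ≤ (3:ℝ)^(((Fintype.card I : ℝ))/4) * (4/3)^(Fintype.card I) := by
  set m := Fintype.card I with hm
  set H : (I → Bool) → ℕ := fun δ => (Finset.univ.filter (fun ι => δ0 ι ≠ δ ι)).card with hH
  have h3 : (0:ℝ) < 3 := by norm_num
  have step1 : ((Finset.univ.filter (fun δ : I → Bool => (H δ : ℝ) ≤ (m:ℝ)/4)).card : ℝ)
      ≤ ∑ δ : I → Bool, (3:ℝ)^((m:ℝ)/4) * (1/3:ℝ)^(H δ) := by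
    rw [Finset.card_eq_sum_ones, Nat.cast_sum]
    rw [← Finset.sum_filter_add_sum_filter_not Finset.univ
      (fun δ : I → Bool => (H δ : ℝ) ≤ (m:ℝ)/4) (fun δ => (3:ℝ)^((m:ℝ)/4) * (1/3:ℝ)^(H δ))]
    have hle : ∀ δ ∈ Finset.univ.filter (fun δ : I → Bool => (H δ : ℝ) ≤ (m:ℝ)/4),
        ((1:ℕ):ℝ) ≤ (3:ℝ)^((m:ℝ)/4) * (1/3:ℝ)^(H δ) := by
      intro δ hδ
      have hδ' := (Finset.mem_filter.mp hδ).2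
      have : (1:ℝ) ≤ (3:ℝ)^((m:ℝ)/4 - (H δ : ℝ)) := by
        apply Real.one_le_rpow (by norm_num) (by linarith)
      calc ((1:ℕ):ℝ) = 1 := by norm_num
        _ ≤ (3:ℝ)^((m:ℝ)/4 - (H δ : ℝ)) := this
        _ = (3:ℝ)^((m:ℝ)/4) * (1/3:ℝ)^(H δ) := by
            rw [Real.rpow_sub h3, Real.rpow_natCast, div_pow, one_pow, one_div,
              ← div_eq_mul_inv]
        _ = (3:ℝ)^((m:ℝ)/4) * (1/3:ℝ)^(H δ) := rfl
    have h2 : (0:ℝ) ≤ ∑ δ ∈ Finset.univ.filter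
        (fun δ : I → Bool => ¬ ((H δ : ℝ) ≤ (m:ℝ)/4)), (3:ℝ)^((m:ℝ)/4) * (1/3:ℝ)^(H δ) := by
      apply Finset.sum_nonneg; intro δ _; positivity
    have h1 := Finset.sum_le_sum hle
    linarith
  have step2 : ∑ δ : I → Bool, (1/3:ℝ)^(H δ) = (4/3:ℝ)^m := by
    have hprod : ∀ δ : I → Bool, (1/3:ℝ)^(H δ) =
        ∏ ι : I, (if δ0 ι ≠ δ ι then (1/3:ℝ) else 1) := by
      intro δ
      rw [Finset.prod_ite, Finset.prod_const, Finset.prod_const, one_pow, mul_one, hH]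
    simp only [hprod]
    have := Finset.prod_univ_sum (fun _ : I => (Finset.univ : Finset Bool))
      (fun ι b => if δ0 ι ≠ b then (1/3:ℝ) else 1)
    rw [Fintype.piFinset_univ] at this
    rw [← this]
    have : ∀ ι : I, (∑ b : Bool, if δ0 ι ≠ b then (1/3:ℝ) else 1) = 4/3 := by
      intro ι; rcases Bool.eq_false_or_eq_true (δ0 ι) with h | h <;> simp [h] <;> norm_num
    rw [Finset.prod_congr rfl (fun ι _ => this ι), Finset.prod_const, Finset.card_univ]
  calc ((Finset.univ.filter (fun δ : I → Bool => (H δ : ℝ) ≤ (m:ℝ)/4)).card : ℝ)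
      ≤ ∑ δ : I → Bool, (3:ℝ)^((m:ℝ)/4) * (1/3:ℝ)^(H δ) := step1
    _ = (3:ℝ)^((m:ℝ)/4) * ∑ δ : I → Bool, (1/3:ℝ)^(H δ) := by rw [Finset.mul_sum]
    _ = (3:ℝ)^((m:ℝ)/4) * (4/3)^m := by rw [step2]

lemma exp_mul_ball_le (m : ℕ) :
    Real.exp ((m:ℝ)/8) * ((3:ℝ)^(((m:ℝ))/4) * (4/3)^m) ≤ (2:ℝ)^m := by
  have h1 : Real.exp ((m:ℝ)/8) = (Real.exp (1/8))^m := by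
    rw [← Real.exp_nat_mul]; ring_nf
  have h2 : (3:ℝ)^((m:ℝ)/4) = ((3:ℝ)^((1:ℝ)/4))^m := by
    rw [← Real.rpow_natCast ((3:ℝ)^((1:ℝ)/4)) m, ← Real.rpow_mul (by norm_num)]
    ring_nf
  rw [h1, h2, ← mul_pow, ← mul_pow]
  apply pow_le_pow_left₀ (by positivity)
  have key : Real.exp (1/8) ≤ (3:ℝ)^((3:ℝ)/4) / 2 := by
    have h8 : (Real.exp (1/8 : ℝ))^(8:ℕ) = Real.exp 1 := by
      rw [← Real.exp_nat_mul]; norm_num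
    have hr : ((3:ℝ)^((3:ℝ)/4) / 2)^(8:ℕ) = 729/256 := by
      rw [div_pow, ← Real.rpow_natCast ((3:ℝ)^((3:ℝ)/4)) 8, ← Real.rpow_mul (by norm_num)]
      norm_num
    apply le_of_pow_le_pow_left₀ (by norm_num : (8:ℕ) ≠ 0) (by positivity)
    rw [h8, hr]
    have := Real.exp_one_lt_d9
    norm_num at this ⊢
    linarith
  calc Real.exp (1/8) * ((3:ℝ)^((1:ℝ)/4) * (4/3))
      ≤ ((3:ℝ)^((3:ℝ)/4) / 2) * ((3:ℝ)^((1:ℝ)/4) * (4/3)) := by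
        apply mul_le_mul_of_nonneg_right key (by positivity)
    _ = 2/3 * ((3:ℝ)^((3:ℝ)/4) * (3:ℝ)^((1:ℝ)/4)) := by ring
    _ = 2/3 * 3 := by rw [← Real.rpow_add (by norm_num)]; norm_num
    _ = 2 := by norm_num

end Aux

/-- If `0 < h ≤ min{M, V/(2^{n-1} L^{n-1} N)}`, then for every
`0 < ε ≤ h L^n / 8`, the covering number of `G_{h,N} = {u_δ}` in `L¹([0,L]^n)` satisfies
`N_ε(G_{h,N} | L¹([0,L]^n)) ≥ e^{N^n/8}`. -/
theorem coveringNumber_udelta_ge (n N : ℕ) (hn : 1 ≤ n) (hN : 0 < N) (L M V h : ℝ)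
    (hL : 0 < L) (hM : 0 < M) (hV : 0 < V) (hh : 0 < h)
    (hhle : h ≤ min M (V / (2 ^ (n - 1) * L ^ (n - 1) * N)))
    (ε : ℝ) (hε : 0 < ε) (hεle : ε ≤ h * L ^ n / 8) :
    Real.exp ((N : ℝ) ^ n / 8) ≤
      (coveringNumber (dL1 n L) {u | ∃ δ : (Fin n → Fin N) → Bool, u = udelta n N L h δ} ε : ℝ) := by
  classical
  have hc : (0:ℝ) < L / N := by positivity
  set m := N ^ n with hm
  have hcardI : Fintype.card (Fin n → Fin N) = m := by
    simp [hm, Fintype.card_fun]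
  set G : Set (Eucl n → ℝ) := {u | ∃ δ : (Fin n → Fin N) → Bool, u = udelta n N L h δ} with hG
  have hd0 : ∀ u : Eucl n → ℝ, dL1 n L u u ≤ 2 * ε := by
    intro u
    have : dL1 n L u u = 0 := by simp [dL1]
    rw [this]; linarith
  -- the defining set is nonempty
  have hSne : {k | ∃ C : Finset (Set (Eucl n → ℝ)), C.card = k ∧ (G ⊆ ⋃ s ∈ C, s) ∧
      (∀ s ∈ C, ∀ x ∈ s, ∀ y ∈ s, dL1 n L x y ≤ 2 * ε)}.Nonempty := by
    refine ⟨(Finset.univ.image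
      (fun δ : (Fin n → Fin N) → Bool => ({udelta n N L h δ} : Set (Eucl n → ℝ)))).card,
      _, rfl, ?_, ?_⟩
    · rintro u ⟨δ, rfl⟩
      refine Set.mem_biUnion (?_ : ({udelta n N L h δ} : Set (Eucl n → ℝ)) ∈ _) rfl
      exact Finset.mem_coe.mpr (Finset.mem_image_of_mem _ (Finset.mem_univ δ))
    · intro s hs x hx y hy
      obtain ⟨δ, -, rfl⟩ := Finset.mem_image.mp hs
      rw [Set.mem_singleton_iff] at hx hy
      subst hx; subst hy
      exact hd0 _
  -- every admissible covering is large
  have hmain : ∀ k ∈ {k | ∃ C : Finset (Set (Eucl n → ℝ)), C.card = k ∧ (G ⊆ ⋃ s ∈ C, s) ∧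
      (∀ s ∈ C, ∀ x ∈ s, ∀ y ∈ s, dL1 n L x y ≤ 2 * ε)},
      Real.exp ((m:ℝ)/8) ≤ (k:ℝ) := by
    rintro k ⟨C, hCcard, hCcover, hCdiam⟩
    have hex : ∀ δ : (Fin n → Fin N) → Bool, ∃ s ∈ C, udelta n N L h δ ∈ s := by
      intro δ
      have hmem : udelta n N L h δ ∈ G := ⟨δ, rfl⟩
      have := hCcover hmem
      simpa using this
    choose f hfC hfmem using hex
    set B : ℝ := (3:ℝ)^((m:ℝ)/4) * (4/3)^m with hB
    have hBpos : (0:ℝ) < B := by rw [hB]; positivity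
    have hfiber : ∀ s ∈ C,
        ((Finset.univ.filter (fun δ : (Fin n → Fin N) → Bool => f δ = s)).card : ℝ) ≤ B := by
      intro s hs
      rcases Finset.eq_empty_or_nonempty
        (Finset.univ.filter (fun δ : (Fin n → Fin N) → Bool => f δ = s)) with he | ⟨δ0, hδ0⟩
      · rw [he]; simpa using hBpos.le
      · have hδ0' := (Finset.mem_filter.mp hδ0).2
        have hsub : Finset.univ.filter (fun δ : (Fin n → Fin N) → Bool => f δ = s) ⊆
            Finset.univ.filter (fun δ : (Fin n → Fin N) → Bool =>
              ((Finset.univ.filter (fun ι => δ0 ι ≠ δ ι)).card : ℝ)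
                ≤ (Fintype.card (Fin n → Fin N) : ℝ)/4) := by
          intro δ hδ
          have hδ' := (Finset.mem_filter.mp hδ).2
          refine Finset.mem_filter.mpr ⟨Finset.mem_univ _, ?_⟩
          have hdle : dL1 n L (udelta n N L h δ0) (udelta n N L h δ) ≤ 2*ε := by
            apply hCdiam s hs _ _ _ _
            · rw [← hδ0']; exact hfmem δ0
            · rw [← hδ']; exact hfmem δ
          rw [dL1_udelta n N hN L h hL hh] at hdle
          have hLn : (L/N)^n * ((m:ℕ):ℝ) = L^n := by
            rw [hm, div_pow]
            push_cast
            field_simp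
          have hpos : (0:ℝ) < h * (L/N)^n := by positivity
          rw [hcardI]
          have h1 : h * (L/N)^n * ((Finset.univ.filter (fun ι => δ0 ι ≠ δ ι)).card : ℝ)
              ≤ h * (L/N)^n * ((m:ℝ)/4) := by
            calc h * (L/N)^n * ((Finset.univ.filter (fun ι => δ0 ι ≠ δ ι)).card : ℝ)
                ≤ 2*ε := hdle
              _ ≤ h * L^n/4 := by linarith
              _ = h * (L/N)^n * ((m:ℝ)/4) := by rw [← hLn]; push_cast; ring
          exact le_of_mul_le_mul_left h1 hpos
        calc ((Finset.univ.filter (fun δ : (Fin n → Fin N) → Bool => f δ = s)).card : ℝ)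
            ≤ ((Finset.univ.filter (fun δ : (Fin n → Fin N) → Bool =>
                ((Finset.univ.filter (fun ι => δ0 ι ≠ δ ι)).card : ℝ)
                  ≤ (Fintype.card (Fin n → Fin N) : ℝ)/4)).card : ℝ) := by
              exact_mod_cast Finset.card_le_card hsub
          _ ≤ (3:ℝ)^(((Fintype.card (Fin n → Fin N) : ℝ))/4) * (4/3)^(Fintype.card (Fin n → Fin N)) :=
              ball_card_le δ0
          _ = B := by rw [hB, hcardI]
    have hcount : ((2:ℝ))^m ≤ (k:ℝ) * B := by
      have hfib := Finset.card_eq_sum_card_fiberwise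
        (f := f) (s := (Finset.univ : Finset ((Fin n → Fin N) → Bool))) (t := C)
        (fun δ _ => hfC δ)
      have h2m : ((Finset.univ : Finset ((Fin n → Fin N) → Bool)).card : ℝ) = 2^m := by
        rw [Finset.card_univ, Fintype.card_fun, hcardI]
        push_cast
        norm_num
      calc ((2:ℝ))^m = ((Finset.univ : Finset ((Fin n → Fin N) → Bool)).card : ℝ) := h2m.symm
        _ = ∑ s ∈ C, ((Finset.univ.filter
              (fun δ : (Fin n → Fin N) → Bool => f δ = s)).card : ℝ) := by
            rw [hfib]; push_cast; rfl
        _ ≤ ∑ _s ∈ C, B := Finset.sum_le_sum hfiber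
        _ = (C.card : ℝ) * B := by rw [Finset.sum_const, nsmul_eq_mul]
        _ = (k:ℝ) * B := by rw [hCcard]
    have hexp := exp_mul_ball_le m
    have : Real.exp ((m:ℝ)/8) * B ≤ (k:ℝ) * B := le_trans (by rw [hB] at *; exact hexp) hcount
    exact le_of_mul_le_mul_right this hBpos
  have hmem := Nat.sInf_mem hSne
  have hrw : Real.exp ((N : ℝ) ^ n / 8) = Real.exp ((m:ℝ)/8) := by
    rw [hm]; push_cast; ring_nf
  rw [hrw]
  exact hmain _ hmem
end
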